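/- arXiv:2402.15912 — 3 statements merged into one kernel-verified Lean document; each statement's English description precedes it below -/
import Mathlib

section
/- For the exponential utility u(w) = (1 − e^{−rw})/r with parameter r ≠ 0 and quasiprobability parameter q = 1/2, the optimal expected utility of any density matrix ρ_S on ℂ^{d_S} equals 𝓤(ρ_S) = (1/r)(1 − Σ_k u_k e^{r ε_k}), where u_1 ≥ u_2 ≥ ... ≥ u_{d_S} are the eigenvalues of the positive semidefinite matrix e^{−rH_S/2} ρ_S e^{−rH_S/2} listed in decreasing order. -/
open Matrix BigOperators Finset Kronecker
open scoped ComplexOrder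

noncomputable section

namespace Daemonic

/-- The outer product `|x⟩⟨y|` as a matrix. -/
def ketbra {ι : Type*} [Fintype ι] (x y : ι → ℂ) : Matrix ι ι ℂ :=
  Matrix.vecMulVec x (star y)

/-- A family of vectors is orthonormal. -/
def ONFam {ι κ : Type*} [Fintype ι] [DecidableEq κ] (v : κ → ι → ℂ) : Prop :=
  ∀ i j, star (v i) ⬝ᵥ v j = if i = j then 1 else 0

/-- A density matrix: positive semidefinite with unit trace. -/
def IsDensity {ι : Type*} [Fintype ι] (ρ : Matrix ι ι ℂ) : Prop :=
  ρ.PosSemidef ∧ ρ.trace = 1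

/-- The matrix element `⟨x|M|y⟩`. -/
def matElem {ι : Type*} [Fintype ι] (M : Matrix ι ι ℂ) (x y : ι → ℂ) : ℂ :=
  star x ⬝ᵥ (M *ᵥ y)

/-- The Hamiltonian `H_S = ∑ₖ εₖ |εₖ⟩⟨εₖ|`. -/
def ham {n : ℕ} (ε : Fin n → ℝ) (v : Fin n → Fin n → ℂ) : Matrix (Fin n) (Fin n) ℂ :=
  ∑ k, (ε k : ℂ) • ketbra (v k) (v k)

/-- `e^{t H_S} = ∑ₖ e^{t εₖ} |εₖ⟩⟨εₖ|` (functional calculus in the eigenbasis of `H_S`). -/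
def expHam {n : ℕ} (ε : Fin n → ℝ) (v : Fin n → Fin n → ℂ) (t : ℝ) :
    Matrix (Fin n) (Fin n) ℂ :=
  ∑ k, (Real.exp (t * ε k) : ℂ) • ketbra (v k) (v k)

/-- The expected utility `⟨u(w)⟩_{ρ,U}` for quasiprobability parameter `q`,
with respect to the eigenvalues `ε` and orthonormal eigenvectors `v` of `H_S`. -/
def expUtil {n : ℕ} (u : ℝ → ℝ) (q : ℝ) (ε : Fin n → ℝ) (v : Fin n → Fin n → ℂ)
    (ρ U : Matrix (Fin n) (Fin n) ℂ) : ℝ :=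
  ∑ i, ∑ j, ∑ k,
    (matElem ρ (v i) (v j) * matElem Uᴴ (v j) (v k) * matElem U (v k) (v i)).re *
      u (q * ε i + (1 - q) * ε j - ε k)

/-- The optimal expected utility `𝓤(ρ) = max over unitaries U of ⟨u(w)⟩_{ρ,U}`. -/
def optUtil {n : ℕ} (u : ℝ → ℝ) (q : ℝ) (ε : Fin n → ℝ) (v : Fin n → Fin n → ℂ)
    (ρ : Matrix (Fin n) (Fin n) ℂ) : ℝ :=
  ⨆ U : Matrix.unitaryGroup (Fin n) ℂ, expUtil u q ε v ρ (U : Matrix (Fin n) (Fin n) ℂ)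

/-- The exponential utility `u(w) = (1 - e^{-r w})/r`. -/
def expUtility (r : ℝ) : ℝ → ℝ := fun w => (1 - Real.exp (-r * w)) / r

/-- The partial trace over the ancilla. -/
def ptraceA {dS dA : ℕ} (ρSA : Matrix (Fin dS × Fin dA) (Fin dS × Fin dA) ℂ) :
    Matrix (Fin dS) (Fin dS) ℂ :=
  Matrix.of fun i j => ∑ a, ρSA (i, a) (j, a)

/-- The unnormalized conditional state `Tr_A((I ⊗ Π_a) ρ_SA (I ⊗ Π_a))`, where
`Π_a = |a⟩⟨a|` projects onto the vector `w a` of an orthonormal basis `w` of the ancilla. -/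
def condUnnorm {dS dA : ℕ} (w : Fin dA → Fin dA → ℂ)
    (ρSA : Matrix (Fin dS × Fin dA) (Fin dS × Fin dA) ℂ) (a : Fin dA) :
    Matrix (Fin dS) (Fin dS) ℂ :=
  Matrix.of fun i j => ∑ c, ∑ d, ρSA (i, c) (j, d) * (w a d * star (w a c))

/-- The outcome probability `p_a = Tr((I ⊗ Π_a) ρ_SA)`. -/
def prob {dS dA : ℕ} (w : Fin dA → Fin dA → ℂ)
    (ρSA : Matrix (Fin dS × Fin dA) (Fin dS × Fin dA) ℂ) (a : Fin dA) : ℝ :=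
  ((condUnnorm w ρSA a).trace).re

/-- The conditional state `ρ_{S|a}`. -/
def condState {dS dA : ℕ} (w : Fin dA → Fin dA → ℂ)
    (ρSA : Matrix (Fin dS × Fin dA) (Fin dS × Fin dA) ℂ) (a : Fin dA) :
    Matrix (Fin dS) (Fin dS) ℂ :=
  ((prob w ρSA a : ℂ))⁻¹ • condUnnorm w ρSA a

/-- The daemonic expected utility `𝓤_{{Π_a}}(ρ_SA) = ∑_a p_a 𝓤(ρ_{S|a})`. -/
def daemonicUtil {dS dA : ℕ} (u : ℝ → ℝ) (q : ℝ) (ε : Fin dS → ℝ)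
    (v : Fin dS → Fin dS → ℂ) (w : Fin dA → Fin dA → ℂ)
    (ρSA : Matrix (Fin dS × Fin dA) (Fin dS × Fin dA) ℂ) : ℝ :=
  ∑ a, prob w ρSA a * optUtil u q ε v (condState w ρSA a)

/-- The maximum daemonic gain `δ𝓤(ρ_SA)`, maximizing over all orthonormal bases of the
ancilla (equivalently, over the rows of all unitary matrices). -/
def daemonicGain {dS dA : ℕ} (u : ℝ → ℝ) (q : ℝ) (ε : Fin dS → ℝ)
    (v : Fin dS → Fin dS → ℂ)
    (ρSA : Matrix (Fin dS × Fin dA) (Fin dS × Fin dA) ℂ) : ℝ :=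
  (⨆ V : Matrix.unitaryGroup (Fin dA) ℂ,
      daemonicUtil u q ε v (fun a => (V : Matrix (Fin dA) (Fin dA) ℂ) a) ρSA) -
    optUtil u q ε v (ptraceA ρSA)

/-- The ergotropy of a (possibly unnormalized) state `σ` with respect to a Hamiltonian `H`:
`ℰ_H(σ) = max over unitaries U of (Tr(Hσ) - Tr(H U σ U†))`. -/
def ergotropyH {n : ℕ} (H σ : Matrix (Fin n) (Fin n) ℂ) : ℝ :=
  ⨆ U : Matrix.unitaryGroup (Fin n) ℂ,
    ((H * σ).trace -
      (H * ((U : Matrix (Fin n) (Fin n) ℂ) * σ * (U : Matrix (Fin n) (Fin n) ℂ)ᴴ)).trace).re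

/-- A separable bipartite state: a convex combination of product states. -/
def IsSeparable {dS dA : ℕ} (ρSA : Matrix (Fin dS × Fin dA) (Fin dS × Fin dA) ℂ) : Prop :=
  ∃ (m : ℕ) (p : Fin m → ℝ) (σ : Fin m → Matrix (Fin dS) (Fin dS) ℂ)
    (τ : Fin m → Matrix (Fin dA) (Fin dA) ℂ),
    (∀ k, 0 ≤ p k) ∧ (∑ k, p k = 1) ∧ (∀ k, IsDensity (σ k)) ∧ (∀ k, IsDensity (τ k)) ∧
    ρSA = ∑ k, (p k : ℂ) • (σ k ⊗ₖ τ k)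

/-- A classical-quantum state `ρ_SA = ∑ₖ pₖ Pₖ ⊗ ρᴬₖ` with `Pₖ` mutually orthogonal
rank-one projectors summing to the identity. -/
def IsClassicalQuantum {dS dA : ℕ}
    (ρSA : Matrix (Fin dS × Fin dA) (Fin dS × Fin dA) ℂ) : Prop :=
  ∃ (p : Fin dS → ℝ) (ψ : Fin dS → Fin dS → ℂ) (τ : Fin dS → Matrix (Fin dA) (Fin dA) ℂ),
    (∀ k, 0 ≤ p k) ∧ (∑ k, p k = 1) ∧ ONFam ψ ∧ (∀ k, IsDensity (τ k)) ∧
    ρSA = ∑ k, (p k : ℂ) • (ketbra (ψ k) (ψ k) ⊗ₖ τ k)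

/-- The dephasing map associated with an orthonormal basis `v`. -/
def dephase {n : ℕ} (v : Fin n → Fin n → ℂ) (ρ : Matrix (Fin n) (Fin n) ℂ) :
    Matrix (Fin n) (Fin n) ℂ :=
  ∑ k, ketbra (v k) (v k) * ρ * ketbra (v k) (v k)

namespace StmtAux

variable {n : ℕ}

lemma key {n : ℕ} (f u : Fin n → ℝ) (hf : Monotone f) (hu : Antitone u)
    (D : Matrix (Fin n) (Fin n) ℝ) (hD : D ∈ doublyStochastic ℝ (Fin n)) :
    ∑ k, f k * u k ≤ ∑ k, ∑ l, f k * u l * D k l := by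
  have hAV : Antivary f u := by
    intro i j hij
    have hji : j ≤ i := by
      by_contra h
      exact absurd (hu (le_of_not_ge h)) (not_le.2 hij)
    exact hf hji
  have hlin : IsLinearMap ℝ (fun M : Matrix (Fin n) (Fin n) ℝ => ∑ k, ∑ l, f k * u l * M k l) := by
    constructor
    · intro M N
      simp [Matrix.add_apply, mul_add, Finset.sum_add_distrib]
    · intro c M
      simp [Matrix.smul_apply, Finset.mul_sum, smul_eq_mul]
      congr 1; ext k; congr 1; ext l; ring
  have hconv : Convex ℝ {M : Matrix (Fin n) (Fin n) ℝ |
      ∑ k, f k * u k ≤ ∑ k, ∑ l, f k * u l * M k l} :=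
    convex_halfSpace_ge hlin _
  have hsub : {σ.permMatrix ℝ | σ : Equiv.Perm (Fin n)} ⊆ {M : Matrix (Fin n) (Fin n) ℝ |
      ∑ k, f k * u k ≤ ∑ k, ∑ l, f k * u l * M k l} := by
    rintro M ⟨σ, rfl⟩
    have h1 : ∀ k, ∑ l, f k * u l * (σ.permMatrix ℝ) k l = f k * u (σ k) := by
      intro k
      rw [Finset.sum_eq_single (σ k)]
      · simp [Equiv.Perm.permMatrix, PEquiv.toMatrix_apply, Equiv.toPEquiv_apply]
      · intro b _ hb
        simp [Equiv.Perm.permMatrix, PEquiv.toMatrix_apply, Equiv.toPEquiv_apply, (Ne.symm hb)]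
      · simp
    simp only [Set.mem_setOf_eq, h1]
    exact hAV.sum_mul_le_sum_mul_comp_perm
  have := convexHull_min hsub hconv
  rw [← doublyStochastic_eq_convexHull_permMatrix] at this
  exact this hD


def famMat (v : Fin n → Fin n → ℂ) : Matrix (Fin n) (Fin n) ℂ := Matrix.of fun a k => v k a

lemma famMat_left {v : Fin n → Fin n → ℂ} (hv : ONFam v) :
    (famMat v)ᴴ * famMat v = 1 := by
  ext i j
  have := hv i j
  simpa [famMat, Matrix.mul_apply, Matrix.conjTranspose_apply, Matrix.one_apply,
    dotProduct] using this

lemma famMat_right {v : Fin n → Fin n → ℂ} (hv : ONFam v) :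
    famMat v * (famMat v)ᴴ = 1 :=
  mul_eq_one_comm.mp (famMat_left hv)

lemma matElem_conj (M : Matrix (Fin n) (Fin n) ℂ) (v : Fin n → Fin n → ℂ) (i j : Fin n) :
    matElem M (v i) (v j) = ((famMat v)ᴴ * M * famMat v) i j := by
  simp only [matElem, famMat, Matrix.mul_apply, Matrix.mulVec, Matrix.conjTranspose_apply,
    Matrix.of_apply, dotProduct, Pi.star_apply, Finset.mul_sum, Finset.sum_mul]
  rw [Finset.sum_comm]
  exact Finset.sum_congr rfl fun a _ => Finset.sum_congr rfl fun b _ => by ring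

lemma ketbra_conj (v : Fin n → Fin n → ℂ) (φ : Fin n → Fin n → ℂ) (l i j : Fin n) :
    ((famMat v)ᴴ * ketbra (φ l) (φ l) * famMat v) i j
      = ((famMat v)ᴴ * famMat φ) i l * star (((famMat v)ᴴ * famMat φ) j l) := by
  simp only [ketbra, famMat, Matrix.mul_apply, Matrix.conjTranspose_apply, Matrix.of_apply,
    Matrix.vecMulVec_apply, Pi.star_apply, star_sum, star_mul', star_star,
    Finset.mul_sum, Finset.sum_mul]
  exact Finset.sum_congr rfl fun a _ => Finset.sum_congr rfl fun b _ => by ring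

lemma expHam_conj {v : Fin n → Fin n → ℂ} (hv : ONFam v) (ε : Fin n → ℝ) (t : ℝ) :
    (famMat v)ᴴ * expHam ε v t * famMat v
      = Matrix.diagonal fun k => (Real.exp (t * ε k) : ℂ) := by
  rw [expHam, Matrix.mul_sum, Matrix.sum_mul]
  have hterm : ∀ k, (famMat v)ᴴ * ((Real.exp (t * ε k) : ℂ) • ketbra (v k) (v k)) * famMat v
      = (Real.exp (t * ε k) : ℂ) • ((famMat v)ᴴ * ketbra (v k) (v k) * famMat v) := by
    intro k; rw [Matrix.mul_smul, Matrix.smul_mul]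
  ext i j
  simp only [Matrix.sum_apply, hterm, Matrix.smul_apply, ketbra_conj v v, famMat_left hv,
    Matrix.one_apply, smul_eq_mul]
  by_cases h : i = j
  · subst h
    simp [Matrix.diagonal_apply_eq, apply_ite, Finset.sum_ite_eq]
  · simp [Matrix.diagonal_apply_ne _ h, apply_ite]
    intro hik
    exact h hik

lemma conj_mul {B : Matrix (Fin n) (Fin n) ℂ} (hB : B * Bᴴ = 1)
    (X Y : Matrix (Fin n) (Fin n) ℂ) :
    Bᴴ * (X * Y) * B = (Bᴴ * X * B) * (Bᴴ * Y * B) := by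
  simp only [Matrix.mul_assoc]
  rw [← Matrix.mul_assoc B Bᴴ, hB, Matrix.one_mul]

lemma main_calc (r : ℝ) (hr : r ≠ 0) (ε : Fin n → ℝ) (u : Fin n → ℝ)
    (R T Ψ : Matrix (Fin n) (Fin n) ℂ)
    (hA : ∀ i j, (Real.exp (-r/2 * ε i) : ℂ) * R i j * (Real.exp (-r/2 * ε j) : ℂ)
        = ∑ l, (u l : ℂ) * Ψ i l * star (Ψ j l))
    (hT : Tᴴ * T = 1) (htr : R.trace = 1) :
    ∑ i, ∑ j, ∑ k, (R i j * star (T k j) * T k i).re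
        * expUtility r (1/2 * ε i + (1 - 1/2) * ε j - ε k)
      = (1/r) * (1 - ∑ k, ∑ l, Real.exp (r * ε k) * u l
          * Complex.normSq ((T * Ψ) k l)) := by
  have hu : ∀ i j k : Fin n, expUtility r (1/2 * ε i + (1 - 1/2) * ε j - ε k)
      = (1 - Real.exp (-r/2 * ε i) * Real.exp (-r/2 * ε j) * Real.exp (r * ε k)) / r := by
    intro i j k
    rw [expUtility]
    rw [← Real.exp_add, ← Real.exp_add]
    congr 2
    ring
  -- Part 1
  have hsum1 : ∑ i, ∑ j, ∑ k, (R i j * star (T k j) * T k i) = 1 := by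
    have hk : ∀ i j, ∑ k, R i j * star (T k j) * T k i
        = R i j * (1 : Matrix (Fin n) (Fin n) ℂ) j i := by
      intro i j
      rw [← hT, Matrix.mul_apply, Finset.mul_sum]
      exact Finset.sum_congr rfl fun k _ => by rw [Matrix.conjTranspose_apply]; ring
    calc ∑ i, ∑ j, ∑ k, R i j * star (T k j) * T k i
        = ∑ i, ∑ j, R i j * (1 : Matrix (Fin n) (Fin n) ℂ) j i :=
          Finset.sum_congr rfl fun i _ => Finset.sum_congr rfl fun j _ => hk i j
      _ = ∑ i, R i i := by
          refine Finset.sum_congr rfl fun i _ => ?_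
          rw [Finset.sum_eq_single i]
          · simp [Matrix.one_apply]
          · intro b _ hb
            simp [Matrix.one_apply, hb]
          · simp
      _ = 1 := htr
  have hP1 : ∑ i, ∑ j, ∑ k, (R i j * star (T k j) * T k i).re = 1 := by
    have h := congrArg Complex.re hsum1
    simpa [Complex.re_sum] using h
  -- Part 2
  have hstar : ∀ k l, star ((T * Ψ) k l) = ∑ j, star (T k j) * star (Ψ j l) := by
    intro k l
    rw [Matrix.mul_apply, star_sum]
    exact Finset.sum_congr rfl fun j _ => star_mul' _ _
  have hZ : ∀ k, ∑ i, ∑ j, ((Real.exp (-r/2 * ε i) : ℂ) * R i j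
        * (Real.exp (-r/2 * ε j) : ℂ)) * (star (T k j) * T k i)
      = ∑ l, (u l : ℂ) * ((T * Ψ) k l * star ((T * Ψ) k l)) := by
    intro k
    calc ∑ i, ∑ j, ((Real.exp (-r/2 * ε i) : ℂ) * R i j * (Real.exp (-r/2 * ε j) : ℂ))
            * (star (T k j) * T k i)
        = ∑ i, ∑ j, ∑ l, ((u l : ℂ) * (T k i * Ψ i l)) * (star (T k j) * star (Ψ j l)) := by
          refine Finset.sum_congr rfl fun i _ => Finset.sum_congr rfl fun j _ => ?_
          rw [hA i j, Finset.sum_mul]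
          exact Finset.sum_congr rfl fun l _ => by ring
      _ = ∑ i, ∑ l, ∑ j, ((u l : ℂ) * (T k i * Ψ i l)) * (star (T k j) * star (Ψ j l)) :=
          Finset.sum_congr rfl fun i _ => Finset.sum_comm
      _ = ∑ l, ∑ i, ∑ j, ((u l : ℂ) * (T k i * Ψ i l)) * (star (T k j) * star (Ψ j l)) :=
          Finset.sum_comm
      _ = ∑ l, (u l : ℂ) * ((T * Ψ) k l * star ((T * Ψ) k l)) := by
          refine Finset.sum_congr rfl fun l _ => Eq.symm ?_
          rw [hstar, Matrix.mul_apply, Finset.sum_mul_sum, Finset.mul_sum]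
          refine Finset.sum_congr rfl fun i _ => ?_
          rw [Finset.mul_sum]
          exact Finset.sum_congr rfl fun j _ => by ring
  have hP2 : ∑ i, ∑ j, ∑ k, (R i j * star (T k j) * T k i).re
        * (Real.exp (-r/2 * ε i) * Real.exp (-r/2 * ε j) * Real.exp (r * ε k))
      = ∑ k, ∑ l, Real.exp (r * ε k) * u l * Complex.normSq ((T * Ψ) k l) := by
    have hcs : ∑ i, ∑ j, ∑ k, ((Real.exp (-r/2 * ε i) * Real.exp (-r/2 * ε j)
          * Real.exp (r * ε k) : ℝ) : ℂ) * (R i j * star (T k j) * T k i)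
        = ((∑ k, ∑ l, Real.exp (r * ε k) * u l * Complex.normSq ((T * Ψ) k l) : ℝ) : ℂ) := by
      calc ∑ i, ∑ j, ∑ k, ((Real.exp (-r/2 * ε i) * Real.exp (-r/2 * ε j)
              * Real.exp (r * ε k) : ℝ) : ℂ) * (R i j * star (T k j) * T k i)
          = ∑ k, ∑ i, ∑ j, ((Real.exp (-r/2 * ε i) * Real.exp (-r/2 * ε j)
              * Real.exp (r * ε k) : ℝ) : ℂ) * (R i j * star (T k j) * T k i) := by
            rw [show (∑ i, ∑ j, ∑ k, ((Real.exp (-r/2 * ε i) * Real.exp (-r/2 * ε j)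
              * Real.exp (r * ε k) : ℝ) : ℂ) * (R i j * star (T k j) * T k i))
              = ∑ i, ∑ k, ∑ j, ((Real.exp (-r/2 * ε i) * Real.exp (-r/2 * ε j)
              * Real.exp (r * ε k) : ℝ) : ℂ) * (R i j * star (T k j) * T k i) from
              Finset.sum_congr rfl fun i _ => Finset.sum_comm]
            exact Finset.sum_comm
        _ = ∑ k, (Real.exp (r * ε k) : ℂ) * ∑ i, ∑ j, ((Real.exp (-r/2 * ε i) : ℂ) * R i j
              * (Real.exp (-r/2 * ε j) : ℂ)) * (star (T k j) * T k i) := by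
            refine Finset.sum_congr rfl fun k _ => ?_
            rw [Finset.mul_sum]
            refine Finset.sum_congr rfl fun i _ => ?_
            rw [Finset.mul_sum]
            refine Finset.sum_congr rfl fun j _ => ?_
            push_cast
            ring
        _ = ∑ k, (Real.exp (r * ε k) : ℂ)
              * ∑ l, (u l : ℂ) * ((T * Ψ) k l * star ((T * Ψ) k l)) := by
            exact Finset.sum_congr rfl fun k _ => by rw [hZ k]
        _ = ((∑ k, ∑ l, Real.exp (r * ε k) * u l * Complex.normSq ((T * Ψ) k l) : ℝ) : ℂ) := by
            push_cast
            refine Finset.sum_congr rfl fun k _ => ?_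
            rw [Finset.mul_sum]
            refine Finset.sum_congr rfl fun l _ => ?_
            rw [Complex.star_def, Complex.mul_conj]
            push_cast
            ring
    calc ∑ i, ∑ j, ∑ k, (R i j * star (T k j) * T k i).re
          * (Real.exp (-r/2 * ε i) * Real.exp (-r/2 * ε j) * Real.exp (r * ε k))
        = ∑ i, ∑ j, ∑ k, (((Real.exp (-r/2 * ε i) * Real.exp (-r/2 * ε j)
            * Real.exp (r * ε k) : ℝ) : ℂ) * (R i j * star (T k j) * T k i)).re := by
          refine Finset.sum_congr rfl fun i _ => Finset.sum_congr rfl fun j _ =>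
            Finset.sum_congr rfl fun k _ => ?_
          rw [Complex.re_ofReal_mul]
          ring
      _ = (∑ i, ∑ j, ∑ k, ((Real.exp (-r/2 * ε i) * Real.exp (-r/2 * ε j)
            * Real.exp (r * ε k) : ℝ) : ℂ) * (R i j * star (T k j) * T k i)).re := by
          simp only [Complex.re_sum]
      _ = ∑ k, ∑ l, Real.exp (r * ε k) * u l * Complex.normSq ((T * Ψ) k l) := by
          rw [hcs, Complex.ofReal_re]
  -- Assembly
  calc ∑ i, ∑ j, ∑ k, (R i j * star (T k j) * T k i).re
        * expUtility r (1/2 * ε i + (1 - 1/2) * ε j - ε k)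
      = ∑ i, ∑ j, ∑ k, ((1/r) * (R i j * star (T k j) * T k i).re
          - (1/r) * ((R i j * star (T k j) * T k i).re
            * (Real.exp (-r/2 * ε i) * Real.exp (-r/2 * ε j) * Real.exp (r * ε k)))) := by
        refine Finset.sum_congr rfl fun i _ => Finset.sum_congr rfl fun j _ =>
          Finset.sum_congr rfl fun k _ => ?_
        rw [hu i j k]
        field_simp
    _ = (1/r) * (∑ i, ∑ j, ∑ k, (R i j * star (T k j) * T k i).re)
        - (1/r) * (∑ i, ∑ j, ∑ k, (R i j * star (T k j) * T k i).re
            * (Real.exp (-r/2 * ε i) * Real.exp (-r/2 * ε j) * Real.exp (r * ε k))) := by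
        simp only [Finset.sum_sub_distrib, Finset.mul_sum]
    _ = (1/r) * (1 - ∑ k, ∑ l, Real.exp (r * ε k) * u l * Complex.normSq ((T * Ψ) k l)) := by
        rw [hP1, hP2]
        ring

lemma expUtil_eq (r : ℝ) (hr : r ≠ 0) (ε : Fin n → ℝ) (u : Fin n → ℝ)
    (v : Fin n → Fin n → ℂ) (ρ U Ψ : Matrix (Fin n) (Fin n) ℂ)
    (hA : ∀ i j, (Real.exp (-r/2 * ε i) : ℂ) * ((famMat v)ᴴ * ρ * famMat v) i j
          * (Real.exp (-r/2 * ε j) : ℂ) = ∑ l, (u l : ℂ) * Ψ i l * star (Ψ j l))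
    (hT1 : ((famMat v)ᴴ * U * famMat v)ᴴ * ((famMat v)ᴴ * U * famMat v) = 1)
    (htr : ((famMat v)ᴴ * ρ * famMat v).trace = 1) :
    expUtil (expUtility r) (1/2) ε v ρ U
      = (1/r) * (1 - ∑ k, ∑ l, Real.exp (r * ε k) * u l
          * Complex.normSq ((((famMat v)ᴴ * U * famMat v) * Ψ) k l)) := by
  rw [expUtil]
  have e2 : ∀ j k : Fin n, matElem Uᴴ (v j) (v k)
      = star (((famMat v)ᴴ * U * famMat v) k j) := by
    intro j k
    rw [matElem_conj]
    rw [show (famMat v)ᴴ * Uᴴ * famMat v = ((famMat v)ᴴ * U * famMat v)ᴴ by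
      simp [Matrix.conjTranspose_mul, Matrix.mul_assoc]]
    rw [Matrix.conjTranspose_apply]
  calc ∑ i, ∑ j, ∑ k, (matElem ρ (v i) (v j) * matElem Uᴴ (v j) (v k)
          * matElem U (v k) (v i)).re * expUtility r (1/2 * ε i + (1 - 1/2) * ε j - ε k)
      = ∑ i, ∑ j, ∑ k, (((famMat v)ᴴ * ρ * famMat v) i j
          * star (((famMat v)ᴴ * U * famMat v) k j)
          * ((famMat v)ᴴ * U * famMat v) k i).re
          * expUtility r (1/2 * ε i + (1 - 1/2) * ε j - ε k) := by
        refine Finset.sum_congr rfl fun i _ => Finset.sum_congr rfl fun j _ =>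
          Finset.sum_congr rfl fun k _ => ?_
        rw [matElem_conj ρ v, e2, matElem_conj U v]
    _ = (1/r) * (1 - ∑ k, ∑ l, Real.exp (r * ε k) * u l
          * Complex.normSq ((((famMat v)ᴴ * U * famMat v) * Ψ) k l)) :=
        main_calc r hr ε u _ _ Ψ hA hT1 htr

end StmtAux

/-- For the exponential utility with `r ≠ 0` and `q = 1/2`, the optimal expected
utility of a density matrix `ρ` equals `(1/r)(1 - ∑ₖ uₖ e^{r εₖ})`, where the `uₖ` are the
eigenvalues of `e^{-rH_S/2} ρ e^{-rH_S/2}` in decreasing order. -/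


theorem stmt0 {dS : ℕ} (r : ℝ) (hr : r ≠ 0)
    (ε : Fin dS → ℝ) (hε : StrictMono ε)
    (v : Fin dS → Fin dS → ℂ) (hv : ONFam v)
    (ρ : Matrix (Fin dS) (Fin dS) ℂ) (hρ : IsDensity ρ)
    (uvals : Fin dS → ℝ) (φ : Fin dS → Fin dS → ℂ)
    (hφ : ONFam φ) (hdec : Antitone uvals)
    (hspec : expHam ε v (-r/2) * ρ * expHam ε v (-r/2)
      = ∑ k, (uvals k : ℂ) • ketbra (φ k) (φ k)) :
    IsGreatest
      {x : ℝ | ∃ U ∈ Matrix.unitaryGroup (Fin dS) ℂ,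
        x = expUtil (expUtility r) (1/2) ε v ρ U}
      ((1/r) * (1 - ∑ k, uvals k * Real.exp (r * ε k))) := by
  classical
  have hB1 : (StmtAux.famMat v)ᴴ * StmtAux.famMat v = 1 := StmtAux.famMat_left hv
  have hB2 : StmtAux.famMat v * (StmtAux.famMat v)ᴴ = 1 := StmtAux.famMat_right hv
  have hC1 : (StmtAux.famMat φ)ᴴ * StmtAux.famMat φ = 1 := StmtAux.famMat_left hφ
  have hC2 : StmtAux.famMat φ * (StmtAux.famMat φ)ᴴ = 1 := StmtAux.famMat_right hφ
  have htrR : ((StmtAux.famMat v)ᴴ * ρ * StmtAux.famMat v).trace = 1 := by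
    rw [Matrix.trace_mul_cycle, hB2, Matrix.one_mul, hρ.2]
  -- the spectral data in the eigenbasis
  have hA : ∀ i j, (Real.exp (-r/2 * ε i) : ℂ)
        * ((StmtAux.famMat v)ᴴ * ρ * StmtAux.famMat v) i j * (Real.exp (-r/2 * ε j) : ℂ)
      = ∑ l, (uvals l : ℂ) * ((StmtAux.famMat v)ᴴ * StmtAux.famMat φ) i l
          * star (((StmtAux.famMat v)ᴴ * StmtAux.famMat φ) j l) := by
    have h1 : (StmtAux.famMat v)ᴴ * (expHam ε v (-r/2) * ρ * expHam ε v (-r/2))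
          * StmtAux.famMat v
        = (StmtAux.famMat v)ᴴ * (∑ k, (uvals k : ℂ) • ketbra (φ k) (φ k))
          * StmtAux.famMat v := by rw [hspec]
    rw [StmtAux.conj_mul hB2, StmtAux.conj_mul hB2, StmtAux.expHam_conj hv] at h1
    have h2 : (StmtAux.famMat v)ᴴ * (∑ k, (uvals k : ℂ) • ketbra (φ k) (φ k))
          * StmtAux.famMat v
        = ∑ k, (uvals k : ℂ) • ((StmtAux.famMat v)ᴴ * ketbra (φ k) (φ k)
            * StmtAux.famMat v) := by
      rw [Matrix.mul_sum, Matrix.sum_mul]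
      exact Finset.sum_congr rfl fun k _ => by rw [Matrix.mul_smul, Matrix.smul_mul]
    rw [h2] at h1
    intro i j
    have h3 := congrFun (congrFun h1 i) j
    rw [Matrix.sum_apply] at h3
    rw [show (Matrix.diagonal (fun k => (Real.exp (-r/2 * ε k) : ℂ))
          * ((StmtAux.famMat v)ᴴ * ρ * StmtAux.famMat v)
          * Matrix.diagonal (fun k => (Real.exp (-r/2 * ε k) : ℂ))) i j
        = (Real.exp (-r/2 * ε i) : ℂ)
          * ((StmtAux.famMat v)ᴴ * ρ * StmtAux.famMat v) i j
          * (Real.exp (-r/2 * ε j) : ℂ) by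
      rw [Matrix.mul_diagonal, Matrix.diagonal_mul]] at h3
    rw [h3]
    refine Finset.sum_congr rfl fun l _ => ?_
    rw [Matrix.smul_apply, StmtAux.ketbra_conj, smul_eq_mul, mul_assoc]
  -- unitary group memberships
  have hBmem : StmtAux.famMat v ∈ Matrix.unitaryGroup (Fin dS) ℂ := by
    rw [Matrix.mem_unitaryGroup_iff, Matrix.star_eq_conjTranspose]
    exact hB2
  have hCmem : StmtAux.famMat φ ∈ Matrix.unitaryGroup (Fin dS) ℂ := by
    rw [Matrix.mem_unitaryGroup_iff, Matrix.star_eq_conjTranspose]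
    exact hC2
  have hBHmem : (StmtAux.famMat v)ᴴ ∈ Matrix.unitaryGroup (Fin dS) ℂ := by
    have := Unitary.star_mem hBmem
    rwa [Matrix.star_eq_conjTranspose] at this
  have hCHmem : (StmtAux.famMat φ)ᴴ ∈ Matrix.unitaryGroup (Fin dS) ℂ := by
    have := Unitary.star_mem hCmem
    rwa [Matrix.star_eq_conjTranspose] at this
  have hΨmem : (StmtAux.famMat v)ᴴ * StmtAux.famMat φ ∈ Matrix.unitaryGroup (Fin dS) ℂ :=
    mul_mem hBHmem hCmem
  -- master formula
  have hmain : ∀ U ∈ Matrix.unitaryGroup (Fin dS) ℂ,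
      expUtil (expUtility r) (1/2) ε v ρ U
        = (1/r) * (1 - ∑ k, ∑ l, Real.exp (r * ε k) * uvals l
            * Complex.normSq ((((StmtAux.famMat v)ᴴ * U * StmtAux.famMat v)
              * ((StmtAux.famMat v)ᴴ * StmtAux.famMat φ)) k l)) := by
    intro U hU
    have hTmem : (StmtAux.famMat v)ᴴ * U * StmtAux.famMat v ∈ Matrix.unitaryGroup (Fin dS) ℂ :=
      mul_mem (mul_mem hBHmem hU) hBmem
    have hT1 : ((StmtAux.famMat v)ᴴ * U * StmtAux.famMat v)ᴴ
        * ((StmtAux.famMat v)ᴴ * U * StmtAux.famMat v) = 1 := by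
      have := Matrix.mem_unitaryGroup_iff'.mp hTmem
      rwa [Matrix.star_eq_conjTranspose] at this
    exact StmtAux.expUtil_eq r hr ε uvals v ρ U _ hA hT1 htrR
  constructor
  · -- membership : the optimal unitary
    have hU0 : StmtAux.famMat v * (StmtAux.famMat φ)ᴴ ∈ Matrix.unitaryGroup (Fin dS) ℂ :=
      mul_mem hBmem hCHmem
    refine ⟨_, hU0, ?_⟩
    rw [hmain _ hU0]
    have hW1 : ((StmtAux.famMat v)ᴴ * (StmtAux.famMat v * (StmtAux.famMat φ)ᴴ)
          * StmtAux.famMat v) * ((StmtAux.famMat v)ᴴ * StmtAux.famMat φ) = 1 := by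
      rw [show (StmtAux.famMat v)ᴴ * (StmtAux.famMat v * (StmtAux.famMat φ)ᴴ)
          = (StmtAux.famMat φ)ᴴ by rw [← Matrix.mul_assoc, hB1, Matrix.one_mul]]
      rw [Matrix.mul_assoc]
      rw [← Matrix.mul_assoc (StmtAux.famMat v) ((StmtAux.famMat v)ᴴ) (StmtAux.famMat φ),
        hB2, Matrix.one_mul, hC1]
    rw [hW1]
    have h5 : ∑ k, ∑ l, Real.exp (r * ε k) * uvals l
        * Complex.normSq ((1 : Matrix (Fin dS) (Fin dS) ℂ) k l)
        = ∑ k, uvals k * Real.exp (r * ε k) := by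
      refine Finset.sum_congr rfl fun k _ => ?_
      rw [Finset.sum_eq_single k]
      · simp [Matrix.one_apply, mul_comm]
      · intro b _ hb
        simp [Matrix.one_apply, Ne.symm hb]
      · simp
    rw [h5]
  · -- upper bound
    rintro x ⟨U, hU, rfl⟩
    rw [hmain U hU]
    have hTmem : (StmtAux.famMat v)ᴴ * U * StmtAux.famMat v ∈ Matrix.unitaryGroup (Fin dS) ℂ :=
      mul_mem (mul_mem hBHmem hU) hBmem
    have hWmem : ((StmtAux.famMat v)ᴴ * U * StmtAux.famMat v)
        * ((StmtAux.famMat v)ᴴ * StmtAux.famMat φ) ∈ Matrix.unitaryGroup (Fin dS) ℂ :=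
      mul_mem hTmem hΨmem
    set W := ((StmtAux.famMat v)ᴴ * U * StmtAux.famMat v)
        * ((StmtAux.famMat v)ᴴ * StmtAux.famMat φ) with hWdef
    have hWr : W * Wᴴ = 1 := by
      have := Matrix.mem_unitaryGroup_iff.mp hWmem
      rwa [Matrix.star_eq_conjTranspose] at this
    have hWl : Wᴴ * W = 1 := by
      have := Matrix.mem_unitaryGroup_iff'.mp hWmem
      rwa [Matrix.star_eq_conjTranspose] at this
    have hrow : ∀ k, ∑ l, Complex.normSq (W k l) = 1 := by
      intro k
      have h : (W * Wᴴ) k k = 1 := by rw [hWr]; simp [Matrix.one_apply]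
      rw [Matrix.mul_apply] at h
      have h2 : ∑ l, ((Complex.normSq (W k l) : ℝ) : ℂ) = 1 := by
        rw [← h]
        refine Finset.sum_congr rfl fun l _ => ?_
        rw [Matrix.conjTranspose_apply, Complex.star_def, Complex.mul_conj]
      exact_mod_cast h2
    have hcol : ∀ l, ∑ k, Complex.normSq (W k l) = 1 := by
      intro l
      have h : (Wᴴ * W) l l = 1 := by rw [hWl]; simp [Matrix.one_apply]
      rw [Matrix.mul_apply] at h
      have h2 : ∑ k, ((Complex.normSq (W k l) : ℝ) : ℂ) = 1 := by
        rw [← h]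
        refine Finset.sum_congr rfl fun k _ => ?_
        rw [Matrix.conjTranspose_apply, Complex.star_def, mul_comm, Complex.mul_conj]
      exact_mod_cast h2
    have hD : (Matrix.of fun k l => Complex.normSq (W k l)) ∈ doublyStochastic ℝ (Fin dS) :=
      mem_doublyStochastic_iff_sum.mpr
        ⟨fun i j => Complex.normSq_nonneg _, hrow, hcol⟩
    rcases hr.lt_or_gt with hneg | hpos
    · -- r < 0
      have hf : Monotone (fun k => -Real.exp (r * ε k)) := by
        intro a b hab
        simp only [neg_le_neg_iff]
        exact Real.exp_le_exp.2 (mul_le_mul_of_nonpos_left (hε.monotone hab) hneg.le)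
      have hk := StmtAux.key (fun k => -Real.exp (r * ε k)) uvals hf hdec _ hD
      have hS : ∑ k, ∑ l, Real.exp (r * ε k) * uvals l * Complex.normSq (W k l)
          ≤ ∑ k, uvals k * Real.exp (r * ε k) := by
        simp only [neg_mul, Finset.sum_neg_distrib, Matrix.of_apply] at hk
        have h6 : ∑ k, uvals k * Real.exp (r * ε k)
            = ∑ k, Real.exp (r * ε k) * uvals k := by
          exact Finset.sum_congr rfl fun k _ => mul_comm _ _
        rw [h6]
        linarith [hk]
      have h7 : (1:ℝ)/r < 0 := one_div_neg.mpr hneg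
      nlinarith [hS]
    · -- r > 0
      have hf : Monotone (fun k => Real.exp (r * ε k)) := by
        intro a b hab
        exact Real.exp_le_exp.2 (mul_le_mul_of_nonneg_left (hε.monotone hab) hpos.le)
      have hk := StmtAux.key (fun k => Real.exp (r * ε k)) uvals hf hdec _ hD
      have hS : ∑ k, uvals k * Real.exp (r * ε k)
          ≤ ∑ k, ∑ l, Real.exp (r * ε k) * uvals l * Complex.normSq (W k l) := by
        simp only [Matrix.of_apply] at hk
        have h6 : ∑ k, uvals k * Real.exp (r * ε k)
            = ∑ k, Real.exp (r * ε k) * uvals k :=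
          Finset.sum_congr rfl fun k _ => mul_comm _ _
        rw [h6]
        exact hk
      have h7 : (0:ℝ) < 1/r := by positivity
      nlinarith [hS]

end Daemonic
end
end

section
/- (Lemma 1) Fix the exponential utility u(w) = (1 − e^{−rw})/r with r ≠ 0 and q = 1/2. Let ρ_SA be a bipartite density matrix on ℂ^{d_S} ⊗ ℂ^{d_A} with reduced state ρ_S = Tr_A(ρ_SA), let {|u_k⟩} be an orthonormal eigenbasis of e^{−rH_S/2} ρ_S e^{−rH_S/2} with eigenvalues in decreasing order, and set H̃_S = Σ_k (e^{r ε_k}/r) |u_k⟩⟨u_k| (whose eigenvalues e^{r ε_k}/r are strictly increasing in k). Then for every orthonormal basis {|a⟩} of ℂ^{d_A}, the daemonic gain satisfies 𝓤_{{Π_a}}(ρ_SA) − 𝓤(ρ_S) = Σ_{a : p_a>0} p_a ℰ_{H̃_S}(e^{−rH_S/2} ρ_{S|a} e^{−rH_S/2}) ≥ 0. -/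
open Matrix BigOperators Finset Kronecker
open scoped ComplexOrder

noncomputable section


lemma perm_entry {n : ℕ} (σ : Equiv.Perm (Fin n)) (k l : Fin n) :
    (σ.permMatrix ℝ) k l = if σ k = l then 1 else 0 := by
  simp [Equiv.Perm.permMatrix, PEquiv.toMatrix_apply, Equiv.toPEquiv_apply, eq_comm]

lemma core_ds {n : ℕ} {h s : Fin n → ℝ} (hh : Monotone h) (hs : Antitone s)
    {D : Matrix (Fin n) (Fin n) ℝ} (hD : D ∈ doublyStochastic ℝ (Fin n)) :
    ∑ k, h k * s k ≤ ∑ k, ∑ l, h k * D k l * s l := by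
  obtain ⟨w, hw0, hw1, hwD⟩ := exists_eq_sum_perm_of_mem_doublyStochastic hD
  have hav : Antivary h s := fun i j hij =>
    hh (le_of_not_ge fun hle => absurd (hs hle) (not_le_of_gt hij))
  have hD' : ∀ k l, D k l = ∑ σ : Equiv.Perm (Fin n), w σ * (σ.permMatrix ℝ) k l := by
    intro k l; rw [← hwD]; simp [Matrix.sum_apply]
  have key : ∑ k, ∑ l, h k * D k l * s l
      = ∑ σ : Equiv.Perm (Fin n), w σ * ∑ k, h k * s (σ k) := by
    have e1 : ∀ k, ∑ l, h k * D k l * s l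
        = ∑ σ : Equiv.Perm (Fin n), ∑ l, w σ * (h k * (σ.permMatrix ℝ) k l * s l) := by
      intro k
      rw [Finset.sum_comm]
      refine Finset.sum_congr rfl fun l _ => ?_
      rw [hD', Finset.mul_sum, Finset.sum_mul]
      exact Finset.sum_congr rfl fun σ _ => by ring
    calc ∑ k, ∑ l, h k * D k l * s l
        = ∑ k, ∑ σ : Equiv.Perm (Fin n), ∑ l, w σ * (h k * (σ.permMatrix ℝ) k l * s l) :=
          Finset.sum_congr rfl fun k _ => e1 k
      _ = ∑ σ : Equiv.Perm (Fin n), ∑ k, ∑ l, w σ * (h k * (σ.permMatrix ℝ) k l * s l) :=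
          Finset.sum_comm
      _ = ∑ σ : Equiv.Perm (Fin n), w σ * ∑ k, h k * s (σ k) := by
          refine Finset.sum_congr rfl fun σ _ => ?_
          rw [Finset.mul_sum]
          refine Finset.sum_congr rfl fun k _ => ?_
          rw [Finset.sum_eq_single (σ k)]
          · rw [perm_entry]; simp
          · intro l _ hl; rw [perm_entry, if_neg (Ne.symm hl)]; ring
          · simp
  rw [key]
  calc ∑ k, h k * s k = ∑ σ : Equiv.Perm (Fin n), w σ * ∑ k, h k * s k := by
        rw [← Finset.sum_mul, hw1, one_mul]
    _ ≤ ∑ σ : Equiv.Perm (Fin n), w σ * ∑ k, h k * s (σ k) := by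
        refine Finset.sum_le_sum fun σ _ => mul_le_mul_of_nonneg_left ?_ (hw0 σ)
        simpa [smul_eq_mul] using hav.sum_smul_le_sum_smul_comp_perm (σ := σ)


lemma unitary_row_sum {n : ℕ} {W : Matrix (Fin n) (Fin n) ℂ}
    (hW : W ∈ Matrix.unitaryGroup (Fin n) ℂ) (k : Fin n) :
    ∑ l, Complex.normSq (W k l) = 1 := by
  have h1 : (W * Wᴴ) k k = 1 := by
    have h2 := Matrix.mem_unitaryGroup_iff.mp hW
    rw [Matrix.star_eq_conjTranspose] at h2
    rw [h2]; simp [Matrix.one_apply]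
  have : ((∑ l, Complex.normSq (W k l) : ℝ) : ℂ) = 1 := by
    rw [← h1, Matrix.mul_apply]
    push_cast
    exact Finset.sum_congr rfl fun l _ => by
      rw [Matrix.conjTranspose_apply]; simp [Complex.star_def, Complex.mul_conj]
  exact_mod_cast this

lemma unitary_col_sum {n : ℕ} {W : Matrix (Fin n) (Fin n) ℂ}
    (hW : W ∈ Matrix.unitaryGroup (Fin n) ℂ) (l : Fin n) :
    ∑ k, Complex.normSq (W k l) = 1 := by
  have h1 : (Wᴴ * W) l l = 1 := by
    have h2 := Matrix.mem_unitaryGroup_iff'.mp hW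
    rw [Matrix.star_eq_conjTranspose] at h2
    rw [h2]; simp [Matrix.one_apply]
  have : ((∑ k, Complex.normSq (W k l) : ℝ) : ℂ) = 1 := by
    rw [← h1, Matrix.mul_apply]
    push_cast
    exact Finset.sum_congr rfl fun k _ => by
      rw [Matrix.conjTranspose_apply, mul_comm]; simp [Complex.star_def, Complex.mul_conj]
  exact_mod_cast this

lemma unitary_normSq_ds {n : ℕ} {W : Matrix (Fin n) (Fin n) ℂ}
    (hW : W ∈ Matrix.unitaryGroup (Fin n) ℂ) :
    (Matrix.of fun k l => Complex.normSq (W k l)) ∈ doublyStochastic ℝ (Fin n) := by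
  rw [mem_doublyStochastic]
  refine ⟨fun i j => Complex.normSq_nonneg _, ?_, ?_⟩
  · funext k; simp [Matrix.mulVec, dotProduct, unitary_row_sum hW]
  · funext l; simp [Matrix.vecMul, dotProduct, unitary_col_sum hW]

lemma trace_diag_sandwich {n : ℕ} (h s : Fin n → ℝ) (W : Matrix (Fin n) (Fin n) ℂ) :
    ((Matrix.diagonal (fun k => (h k : ℂ)) * W * Matrix.diagonal (fun k => (s k : ℂ)) * Wᴴ).trace).re
      = ∑ k, ∑ l, h k * Complex.normSq (W k l) * s l := by
  have entry : ∀ k, (Matrix.diagonal (fun k => (h k : ℂ)) * W * Matrix.diagonal (fun k => (s k : ℂ)) * Wᴴ) k k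
      = ∑ l, ((h k * Complex.normSq (W k l) * s l : ℝ) : ℂ) := by
    intro k
    rw [Matrix.mul_apply]
    refine Finset.sum_congr rfl fun l _ => ?_
    rw [Matrix.mul_apply]
    rw [Finset.sum_eq_single l]
    · rw [Matrix.mul_apply, Finset.sum_eq_single k]
      · simp only [Matrix.diagonal_apply_eq, Matrix.conjTranspose_apply]
        push_cast
        rw [show (h k : ℂ) * W k l * (s l) * star (W k l)
            = (h k) * (W k l * star (W k l)) * (s l) by ring]
        simp [Complex.star_def, Complex.mul_conj]
      · intro b _ hb; simp [Matrix.diagonal_apply_ne' _ hb]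
      · simp
    · intro b _ hb; simp [Matrix.diagonal_apply_ne _ hb]
    · simp
  rw [Matrix.trace]
  rw [Complex.re_sum]
  refine Finset.sum_congr rfl fun k _ => ?_
  rw [Matrix.diag_apply, entry k, Complex.re_sum]
  simp [Complex.ofReal_re]


section DMIN
variable {n : ℕ}

/-- abbreviation for the group -/
local notation "UG" => Matrix.unitaryGroup (Fin n) ℂ

instance : Nonempty (Matrix.unitaryGroup (Fin n) ℂ) := ⟨1⟩

noncomputable def fval (h : Fin n → ℝ) (τ : Matrix (Fin n) (Fin n) ℂ) (W : Matrix (Fin n) (Fin n) ℂ) : ℝ :=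
  ((Matrix.diagonal (fun k => (h k : ℂ)) * W * τ * Wᴴ).trace).re

noncomputable def dmin (h : Fin n → ℝ) (τ : Matrix (Fin n) (Fin n) ℂ) : ℝ :=
  ⨅ W : Matrix.unitaryGroup (Fin n) ℂ, fval h τ (W : Matrix (Fin n) (Fin n) ℂ)

lemma abs_entry_le_one {W : Matrix (Fin n) (Fin n) ℂ} (hW : W ∈ UG) (k l : Fin n) :
    ‖W k l‖ ≤ 1 := by
  have h1 : Complex.normSq (W k l) ≤ 1 := by
    rw [← unitary_row_sum hW k]
    exact Finset.single_le_sum (fun i _ => Complex.normSq_nonneg _) (Finset.mem_univ l)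
  rw [← Complex.sq_norm] at h1
  nlinarith [norm_nonneg (W k l)]

lemma fval_bound (h : Fin n → ℝ) (τ : Matrix (Fin n) (Fin n) ℂ)
    {W : Matrix (Fin n) (Fin n) ℂ} (hW : W ∈ UG) :
    |fval h τ W| ≤ (∑ k, |h k|) * (∑ i, ∑ j, ‖τ i j‖) := by
  have hentry : ∀ k, ‖(W * τ * Wᴴ) k k‖ ≤ ∑ i, ∑ j, ‖τ i j‖ := by
    intro k
    rw [Matrix.mul_apply]
    refine (norm_sum_le _ _).trans ?_
    have perm : ∀ m, ‖(W * τ) k m * Wᴴ m k‖ ≤ ∑ l, ‖τ l m‖ := by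
      intro m
      rw [norm_mul]
      calc ‖(W * τ) k m‖ * ‖Wᴴ m k‖
          ≤ (∑ l, ‖τ l m‖) * 1 := by
            refine mul_le_mul ?_ ?_ (norm_nonneg _)
              (Finset.sum_nonneg fun _ _ => norm_nonneg _)
            · rw [Matrix.mul_apply]
              refine (norm_sum_le _ _).trans ?_
              refine Finset.sum_le_sum fun l _ => ?_
              rw [norm_mul]
              calc ‖W k l‖ * ‖τ l m‖
                  ≤ 1 * ‖τ l m‖ :=
                    mul_le_mul_of_nonneg_right (abs_entry_le_one hW k l) (norm_nonneg _)
                _ = ‖τ l m‖ := one_mul _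
            · rw [Matrix.conjTranspose_apply]
              rw [show ‖star (W k m)‖ = ‖W k m‖ from norm_star _]
              exact abs_entry_le_one hW k m
        _ = ∑ l, ‖τ l m‖ := mul_one _
    calc ∑ m, ‖(W * τ) k m * Wᴴ m k‖
        ≤ ∑ m, ∑ l, ‖τ l m‖ := Finset.sum_le_sum fun m _ => perm m
      _ = ∑ i, ∑ j, ‖τ i j‖ := Finset.sum_comm
  have tr : fval h τ W = ∑ k, h k * ((W * τ * Wᴴ) k k).re := by
    unfold fval
    rw [show Matrix.diagonal (fun k => (h k : ℂ)) * W * τ * Wᴴ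
        = Matrix.diagonal (fun k => (h k : ℂ)) * (W * τ * Wᴴ) by
      simp only [Matrix.mul_assoc]]
    rw [Matrix.trace, Complex.re_sum]
    refine Finset.sum_congr rfl fun k _ => ?_
    rw [Matrix.diag_apply, Matrix.diagonal_mul]
    simp [Complex.ofReal_re]
  rw [tr]
  calc |∑ k, h k * ((W * τ * Wᴴ) k k).re| ≤ ∑ k, |h k * ((W * τ * Wᴴ) k k).re| :=
        Finset.abs_sum_le_sum_abs _ _
    _ ≤ ∑ k, |h k| * (∑ i, ∑ j, ‖τ i j‖) := by
        refine Finset.sum_le_sum fun k _ => ?_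
        rw [abs_mul]
        refine mul_le_mul_of_nonneg_left ?_ (abs_nonneg _)
        exact (Complex.abs_re_le_norm _).trans (hentry k)
    _ = (∑ k, |h k|) * (∑ i, ∑ j, ‖τ i j‖) := by rw [Finset.sum_mul]

lemma fval_bddBelow (h : Fin n → ℝ) (τ : Matrix (Fin n) (Fin n) ℂ) :
    BddBelow (Set.range fun W : Matrix.unitaryGroup (Fin n) ℂ =>
      fval h τ (W : Matrix (Fin n) (Fin n) ℂ)) := by
  refine ⟨-((∑ k, |h k|) * (∑ i, ∑ j, ‖τ i j‖)), ?_⟩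
  rintro x ⟨W, rfl⟩
  have := fval_bound h τ W.2
  exact neg_le_of_abs_le this

lemma dmin_le (h : Fin n → ℝ) (τ : Matrix (Fin n) (Fin n) ℂ)
    (W : Matrix.unitaryGroup (Fin n) ℂ) :
    dmin h τ ≤ fval h τ (W : Matrix (Fin n) (Fin n) ℂ) :=
  ciInf_le (fval_bddBelow h τ) W

lemma le_dmin {h : Fin n → ℝ} {τ : Matrix (Fin n) (Fin n) ℂ} {c : ℝ}
    (hc : ∀ W : Matrix.unitaryGroup (Fin n) ℂ, c ≤ fval h τ (W : Matrix (Fin n) (Fin n) ℂ)) :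
    c ≤ dmin h τ :=
  le_ciInf hc

lemma dmin_conj_le (h : Fin n → ℝ) (τ : Matrix (Fin n) (Fin n) ℂ)
    {A : Matrix (Fin n) (Fin n) ℂ} (hA : A ∈ UG) :
    dmin h τ ≤ dmin h (A * τ * Aᴴ) := by
  refine le_dmin fun W => ?_
  have key : fval h (A * τ * Aᴴ) (W : Matrix (Fin n) (Fin n) ℂ)
      = fval h τ ((W : Matrix (Fin n) (Fin n) ℂ) * A) := by
    unfold fval
    rw [Matrix.conjTranspose_mul]
    simp only [Matrix.mul_assoc]
  rw [key]
  exact dmin_le h τ ⟨(W : Matrix (Fin n) (Fin n) ℂ) * A, mul_mem W.2 hA⟩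

lemma dmin_conj (h : Fin n → ℝ) (τ : Matrix (Fin n) (Fin n) ℂ)
    {A : Matrix (Fin n) (Fin n) ℂ} (hA : A ∈ UG) :
    dmin h (A * τ * Aᴴ) = dmin h τ := by
  refine le_antisymm ?_ (dmin_conj_le h τ hA)
  have h2 := dmin_conj_le h (A * τ * Aᴴ) (Unitary.star_mem hA)
  have : Aᴴ * (A * τ * Aᴴ) * (Aᴴ)ᴴ = τ := by
    have hAA : Aᴴ * A = 1 := by
      have := Matrix.mem_unitaryGroup_iff'.mp hA
      rwa [Matrix.star_eq_conjTranspose] at this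
    rw [Matrix.conjTranspose_conjTranspose]
    calc Aᴴ * (A * τ * Aᴴ) * A = (Aᴴ * A) * τ * (Aᴴ * A) := by simp only [Matrix.mul_assoc]
      _ = τ := by rw [hAA, Matrix.one_mul, Matrix.mul_one]
  rw [Matrix.star_eq_conjTranspose] at h2
  rw [this] at h2
  exact h2

lemma dmin_diag {h s : Fin n → ℝ} (hh : Monotone h) (hs : Antitone s) :
    dmin h (Matrix.diagonal (fun k => (s k : ℂ))) = ∑ k, h k * s k := by
  refine le_antisymm ?_ ?_
  · have := dmin_le h (Matrix.diagonal (fun k => (s k : ℂ))) 1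
    rw [show ((1 : Matrix.unitaryGroup (Fin n) ℂ) : Matrix (Fin n) (Fin n) ℂ) = 1 from rfl] at this
    refine this.trans (le_of_eq ?_)
    unfold fval
    rw [Matrix.mul_one, Matrix.conjTranspose_one, Matrix.mul_one,
      Matrix.diagonal_mul_diagonal, Matrix.trace_diagonal, Complex.re_sum]
    simp [← Complex.ofReal_mul, Complex.ofReal_re]
  · refine le_dmin fun W => ?_
    unfold fval
    rw [trace_diag_sandwich]
    have := core_ds hh hs (unitary_normSq_ds W.2)
    refine this.trans (le_of_eq ?_)
    rfl
end DMIN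

namespace Daemonic

open scoped Classical

variable {n : ℕ}

/-- the matrix whose columns are the family vectors -/
def basisMat (v : Fin n → Fin n → ℂ) : Matrix (Fin n) (Fin n) ℂ :=
  Matrix.of fun x i => v i x

lemma basisMat_conj_mul (v : Fin n → Fin n → ℂ) (hv : ONFam v) :
    (basisMat v)ᴴ * basisMat v = 1 := by
  ext i j
  rw [Matrix.mul_apply, Matrix.one_apply]
  have := hv i j
  rw [dotProduct] at this
  simpa [basisMat, Matrix.conjTranspose_apply] using this

lemma basisMat_unitary (v : Fin n → Fin n → ℂ) (hv : ONFam v) :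
    basisMat v ∈ Matrix.unitaryGroup (Fin n) ℂ := by
  rw [Matrix.mem_unitaryGroup_iff']
  rw [Matrix.star_eq_conjTranspose]
  exact basisMat_conj_mul v hv

lemma basisMat_mul_conj (v : Fin n → Fin n → ℂ) (hv : ONFam v) :
    basisMat v * (basisMat v)ᴴ = 1 :=
  mul_eq_one_comm.mpr (basisMat_conj_mul v hv)

lemma matElem_eq (M : Matrix (Fin n) (Fin n) ℂ) (v : Fin n → Fin n → ℂ) (i j : Fin n) :
    matElem M (v i) (v j) = ((basisMat v)ᴴ * M * basisMat v) i j := by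
  unfold matElem
  calc star (v i) ⬝ᵥ (M *ᵥ v j)
      = ∑ x, ∑ y, star (v i x) * (M x y * v j y) := by
        rw [dotProduct]
        refine Finset.sum_congr rfl fun x _ => ?_
        rw [Matrix.mulVec, dotProduct, Finset.mul_sum]
        exact Finset.sum_congr rfl fun y _ => rfl
    _ = ∑ y, ∑ x, star (v i x) * (M x y * v j y) := Finset.sum_comm
    _ = ((basisMat v)ᴴ * M * basisMat v) i j := by
        rw [Matrix.mul_apply]
        refine Finset.sum_congr rfl fun y _ => ?_
        rw [Matrix.mul_apply, Finset.sum_mul]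
        refine Finset.sum_congr rfl fun x _ => ?_
        simp only [basisMat, Matrix.conjTranspose_apply, Matrix.of_apply, Pi.star_apply]
        ring

lemma sum_smul_ketbra (φ : Fin n → Fin n → ℂ) (c : Fin n → ℂ) :
    ∑ k, c k • ketbra (φ k) (φ k)
      = basisMat φ * Matrix.diagonal c * (basisMat φ)ᴴ := by
  ext x y
  rw [Matrix.sum_apply, Matrix.mul_apply]
  refine Finset.sum_congr rfl fun k _ => ?_
  rw [Matrix.mul_apply, Finset.sum_eq_single k]
  · simp [ketbra, basisMat, Matrix.vecMulVec_apply, Matrix.conjTranspose_apply,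
      Matrix.diagonal_apply_eq, Pi.star_apply]
    ring
  · intro b _ hb; simp [Matrix.diagonal_apply_ne _ hb]
  · simp

lemma expHam_eq (ε : Fin n → ℝ) (v : Fin n → Fin n → ℂ) (t : ℝ) :
    expHam ε v t
      = basisMat v * Matrix.diagonal (fun k => (Real.exp (t * ε k) : ℂ)) * (basisMat v)ᴴ :=
  sum_smul_ketbra v _

variable {n : ℕ}

lemma conj_sandwich (ε : Fin n → ℝ) (v : Fin n → Fin n → ℂ) (hv : ONFam v) (t : ℝ)
    (ρ : Matrix (Fin n) (Fin n) ℂ) :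
    (basisMat v)ᴴ * (expHam ε v t * ρ * expHam ε v t) * basisMat v
      = Matrix.diagonal (fun k => (Real.exp (t * ε k) : ℂ))
          * ((basisMat v)ᴴ * ρ * basisMat v)
          * Matrix.diagonal (fun k => (Real.exp (t * ε k) : ℂ)) := by
  have h1 : (basisMat v)ᴴ * basisMat v = 1 := basisMat_conj_mul v hv
  rw [expHam_eq]
  set V := basisMat v
  set D := Matrix.diagonal (fun k => (Real.exp (t * ε k) : ℂ))
  calc Vᴴ * (V * D * Vᴴ * ρ * (V * D * Vᴴ)) * V
      = (Vᴴ * V) * (D * ((Vᴴ * ρ * V) * (D * (Vᴴ * V)))) := by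
        simp only [Matrix.mul_assoc]
    _ = D * (Vᴴ * ρ * V) * D := by
        rw [h1, Matrix.mul_one, Matrix.one_mul]
        simp only [Matrix.mul_assoc]

lemma expUtil_formula (r : ℝ) (ε : Fin n → ℝ) (v : Fin n → Fin n → ℂ)
    (hv : ONFam v) (ρ : Matrix (Fin n) (Fin n) ℂ) {U : Matrix (Fin n) (Fin n) ℂ}
    (hU : U ∈ Matrix.unitaryGroup (Fin n) ℂ) :
    expUtil (expUtility r) (1/2) ε v ρ U
      = ρ.trace.re / r -
        fval (fun k => Real.exp (r * ε k) / r)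
          ((basisMat v)ᴴ * (expHam ε v (-r/2) * ρ * expHam ε v (-r/2)) * basisMat v)
          ((basisMat v)ᴴ * U * basisMat v) := by
  have hVmem := basisMat_unitary v hv
  set V := basisMat v with hVdef
  set P := Vᴴ * ρ * V with hPdef
  set U' := Vᴴ * U * V with hU'def
  set e : Fin n → ℂ := fun i => (Real.exp (-r/2 * ε i) : ℂ) with he
  set g : Fin n → ℂ := fun k => (Real.exp (r * ε k) : ℂ) with hg
  have hVV : Vᴴ * V = 1 := basisMat_conj_mul v hv
  have hVV' : V * Vᴴ = 1 := basisMat_mul_conj v hv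
  have hU'conj : Vᴴ * Uᴴ * V = U'ᴴ := by
    rw [hU'def, Matrix.conjTranspose_mul, Matrix.conjTranspose_mul,
      Matrix.conjTranspose_conjTranspose]
    simp only [Matrix.mul_assoc]
  have hU'mem : U' ∈ Matrix.unitaryGroup (Fin n) ℂ := by
    have hVs : Vᴴ ∈ Matrix.unitaryGroup (Fin n) ℂ := by
      rw [← Matrix.star_eq_conjTranspose]
      exact Unitary.star_mem hVmem
    exact mul_mem (mul_mem hVs hU) hVmem
  have hU'unit : U'ᴴ * U' = 1 := by
    have := Matrix.mem_unitaryGroup_iff'.mp hU'mem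
    rwa [Matrix.star_eq_conjTranspose] at this
  -- Step 1: pointwise rewrite of the summand
  have step1 : expUtil (expUtility r) (1/2) ε v ρ U
      = ∑ i, ∑ j, ∑ k,
          (P i j * U'ᴴ j k * U' k i * (((1:ℂ) - e i * e j * g k) * ((1/r : ℝ) : ℂ))).re := by
    unfold expUtil
    refine Finset.sum_congr rfl fun i _ => Finset.sum_congr rfl fun j _ =>
      Finset.sum_congr rfl fun k _ => ?_
    have remul : ∀ (z : ℂ) (c : ℝ), (z * (c:ℂ)).re = z.re * c := fun z c => by
      rw [Complex.mul_re, Complex.ofReal_re, Complex.ofReal_im]; ring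
    rw [matElem_eq ρ v i j, matElem_eq Uᴴ v j k, matElem_eq U v k i, ← hVdef, hU'conj,
      ← hPdef, ← hU'def]
    have hu : expUtility r (1/2 * ε i + (1 - 1/2) * ε j - ε k)
        = (1 - Real.exp (-r/2 * ε i) * Real.exp (-r/2 * ε j) * Real.exp (r * ε k)) * (1/r) := by
      unfold expUtility
      rw [← Real.exp_add, ← Real.exp_add]
      rw [show -r/2 * ε i + -r/2 * ε j + r * ε k = -r * (1/2 * ε i + (1 - 1/2) * ε j - ε k) by ring]
      ring
    rw [hu]
    rw [show ((1:ℂ) - e i * e j * g k) * ((1/r : ℝ) : ℂ)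
        = (((1 - Real.exp (-r/2 * ε i) * Real.exp (-r/2 * ε j) * Real.exp (r * ε k)) * (1/r) : ℝ) : ℂ) by
      rw [he, hg]; push_cast; ring]
    rw [remul]
  -- Step 2: the complex triple sum identity
  have I1 : ∑ i, ∑ j, ∑ k, P i j * U'ᴴ j k * U' k i = ρ.trace := by
    have inner : ∀ i j, ∑ k, P i j * U'ᴴ j k * U' k i = P i j * (1 : Matrix (Fin n) (Fin n) ℂ) j i := by
      intro i j
      rw [← hU'unit, Matrix.mul_apply, Finset.mul_sum]
      exact Finset.sum_congr rfl fun k _ => by ring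
    have : ∑ i, ∑ j, ∑ k, P i j * U'ᴴ j k * U' k i = ∑ i, P i i := by
      refine Finset.sum_congr rfl fun i _ => ?_
      rw [Finset.sum_congr rfl fun j _ => inner i j]
      rw [Finset.sum_eq_single i]
      · simp [Matrix.one_apply]
      · intro j _ hj; simp [Matrix.one_apply, hj]
      · simp
    rw [this]
    have h2 : (Vᴴ * ρ * V).trace = ρ.trace := by
      rw [Matrix.trace_mul_cycle, hVV', Matrix.one_mul]
    rw [← h2]
    simp [Matrix.trace, Matrix.diag, hPdef]
  have I2 : ∑ i, ∑ j, ∑ k, P i j * U'ᴴ j k * U' k i * (e i * e j * g k)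
      = (Matrix.diagonal g * U' * (Matrix.diagonal e * P * Matrix.diagonal e) * U'ᴴ).trace := by
    have swap1 : ∑ i, ∑ j, ∑ k, P i j * U'ᴴ j k * U' k i * (e i * e j * g k)
        = ∑ k, ∑ j, ∑ i, P i j * U'ᴴ j k * U' k i * (e i * e j * g k) := by
      calc ∑ i, ∑ j, ∑ k, P i j * U'ᴴ j k * U' k i * (e i * e j * g k)
          = ∑ i, ∑ k, ∑ j, P i j * U'ᴴ j k * U' k i * (e i * e j * g k) :=
            Finset.sum_congr rfl fun i _ => Finset.sum_comm
        _ = ∑ k, ∑ i, ∑ j, P i j * U'ᴴ j k * U' k i * (e i * e j * g k) := Finset.sum_comm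
        _ = ∑ k, ∑ j, ∑ i, P i j * U'ᴴ j k * U' k i * (e i * e j * g k) :=
            Finset.sum_congr rfl fun k _ => Finset.sum_comm
    rw [swap1, Matrix.trace]
    refine Finset.sum_congr rfl fun k _ => ?_
    rw [Matrix.diag_apply,
      show Matrix.diagonal g * U' * (Matrix.diagonal e * P * Matrix.diagonal e) * U'ᴴ
        = Matrix.diagonal g * (U' * (Matrix.diagonal e * P * Matrix.diagonal e) * U'ᴴ) by
        simp only [Matrix.mul_assoc],
      Matrix.diagonal_mul, Matrix.mul_apply, Finset.mul_sum]
    refine Finset.sum_congr rfl fun j _ => ?_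
    rw [Matrix.mul_apply, Finset.sum_mul, Finset.mul_sum]
    refine Finset.sum_congr rfl fun i _ => ?_
    rw [Matrix.mul_diagonal, Matrix.diagonal_mul]
    ring
  -- assemble
  rw [step1]
  have re3 : (∑ i, ∑ j, ∑ k,
      P i j * U'ᴴ j k * U' k i * (((1:ℂ) - e i * e j * g k) * ((1/r : ℝ) : ℂ))).re
      = ∑ i, ∑ j, ∑ k,
        (P i j * U'ᴴ j k * U' k i * (((1:ℂ) - e i * e j * g k) * ((1/r : ℝ) : ℂ))).re := by
    rw [Complex.re_sum]
    refine Finset.sum_congr rfl fun i _ => ?_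
    rw [Complex.re_sum]
    exact Finset.sum_congr rfl fun j _ => Complex.re_sum _ _
  rw [← re3]
  have key : ∑ i, ∑ j, ∑ k,
      P i j * U'ᴴ j k * U' k i * (((1:ℂ) - e i * e j * g k) * ((1/r : ℝ) : ℂ))
      = ((1/r : ℝ) : ℂ) * ρ.trace
        - ((1/r : ℝ) : ℂ)
          * (Matrix.diagonal g * U' * (Matrix.diagonal e * P * Matrix.diagonal e) * U'ᴴ).trace := by
    calc ∑ i, ∑ j, ∑ k,
        P i j * U'ᴴ j k * U' k i * (((1:ℂ) - e i * e j * g k) * ((1/r : ℝ) : ℂ))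
        = ∑ i, ∑ j, ∑ k,
          (((1/r : ℝ) : ℂ) * (P i j * U'ᴴ j k * U' k i)
            - ((1/r : ℝ) : ℂ) * (P i j * U'ᴴ j k * U' k i * (e i * e j * g k))) := by
          refine Finset.sum_congr rfl fun i _ => Finset.sum_congr rfl fun j _ =>
            Finset.sum_congr rfl fun k _ => ?_
          ring
      _ = ((1/r : ℝ) : ℂ) * (∑ i, ∑ j, ∑ k, P i j * U'ᴴ j k * U' k i)
          - ((1/r : ℝ) : ℂ) * (∑ i, ∑ j, ∑ k, P i j * U'ᴴ j k * U' k i * (e i * e j * g k)) := by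
          simp only [Finset.sum_sub_distrib, ← Finset.mul_sum]
      _ = _ := by rw [I1, I2]
  rw [key, Complex.sub_re, Complex.re_ofReal_mul, Complex.re_ofReal_mul]
  rw [conj_sandwich ε v hv (-r/2) ρ]
  rw [← hPdef, ← he]
  unfold fval
  have hdiag : Matrix.diagonal (fun k => ((Real.exp (r * ε k) / r : ℝ) : ℂ))
      = ((1/r : ℝ) : ℂ) • Matrix.diagonal g := by
    ext i j
    rcases eq_or_ne i j with rfl | hne
    · rw [Matrix.smul_apply, Matrix.diagonal_apply_eq, Matrix.diagonal_apply_eq, hg,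
        smul_eq_mul]
      push_cast
      ring
    · rw [Matrix.smul_apply, Matrix.diagonal_apply_ne _ hne, Matrix.diagonal_apply_ne _ hne,
        smul_eq_mul, mul_zero]
  rw [hdiag]
  rw [smul_mul_assoc, smul_mul_assoc, smul_mul_assoc, Matrix.trace_smul]
  rw [show ∀ z : ℂ, (((1/r : ℝ) : ℂ) • z).re = (1/r) * z.re from fun z => by
    rw [smul_eq_mul, Complex.re_ofReal_mul]]
  ring

lemma csup_const_sub {ι : Type*} [Nonempty ι] (c : ℝ) (g : ι → ℝ)
    (hb : BddBelow (Set.range g)) :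
    (⨆ i, (c - g i)) = c - ⨅ i, g i := by
  obtain ⟨m, hm⟩ := hb
  have hab : BddAbove (Set.range fun i => c - g i) := by
    refine ⟨c - m, ?_⟩
    rintro x ⟨i, rfl⟩
    have : m ≤ g i := hm ⟨i, rfl⟩
    simp only
    linarith
  refine le_antisymm (ciSup_le fun i => sub_le_sub_left (ciInf_le ⟨m, hm⟩ i) c) ?_
  have h1 : ∀ i, c - (⨆ i, (c - g i)) ≤ g i := fun i => by
    have := le_ciSup hab i
    linarith
  have := le_ciInf h1
  linarith

lemma dmin_twosided (h : Fin n → ℝ) (τ : Matrix (Fin n) (Fin n) ℂ)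
    {A B : Matrix (Fin n) (Fin n) ℂ} (hA : A ∈ Matrix.unitaryGroup (Fin n) ℂ)
    (hB : B ∈ Matrix.unitaryGroup (Fin n) ℂ) :
    (⨅ U : Matrix.unitaryGroup (Fin n) ℂ,
      fval h τ (A * (U : Matrix (Fin n) (Fin n) ℂ) * B)) = dmin h τ := by
  have mem : ∀ U : Matrix.unitaryGroup (Fin n) ℂ,
      A * (U : Matrix (Fin n) (Fin n) ℂ) * B ∈ Matrix.unitaryGroup (Fin n) ℂ := fun U =>
    mul_mem (mul_mem hA U.2) hB
  have hbd : BddBelow (Set.range fun U : Matrix.unitaryGroup (Fin n) ℂ =>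
      fval h τ (A * (U : Matrix (Fin n) (Fin n) ℂ) * B)) := by
    refine ⟨-((∑ k, |h k|) * (∑ i, ∑ j, ‖τ i j‖)), ?_⟩
    rintro x ⟨U, rfl⟩
    exact neg_le_of_abs_le (fval_bound h τ (mem U))
  refine le_antisymm ?_ (le_ciInf fun U => dmin_le h τ ⟨_, mem U⟩)
  refine le_dmin fun W => ?_
  have hWmem : star A * (W : Matrix (Fin n) (Fin n) ℂ) * star B ∈ Matrix.unitaryGroup (Fin n) ℂ :=
    mul_mem (mul_mem (Unitary.star_mem hA) W.2) (Unitary.star_mem hB)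
  have key : A * (star A * (W : Matrix (Fin n) (Fin n) ℂ) * star B) * B
      = (W : Matrix (Fin n) (Fin n) ℂ) := by
    have h1 : A * star A = 1 := Matrix.mem_unitaryGroup_iff.mp hA
    have h2 : star B * B = 1 := Matrix.mem_unitaryGroup_iff'.mp hB
    calc A * (star A * (W : Matrix (Fin n) (Fin n) ℂ) * star B) * B
        = (A * star A) * (W : Matrix (Fin n) (Fin n) ℂ) * (star B * B) := by
          simp only [Matrix.mul_assoc]
      _ = (W : Matrix (Fin n) (Fin n) ℂ) := by rw [h1, h2, Matrix.one_mul, Matrix.mul_one]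
  have := ciInf_le hbd (⟨_, hWmem⟩ : Matrix.unitaryGroup (Fin n) ℂ)
  simpa [key] using this

lemma optUtil_formula (r : ℝ) (ε : Fin n → ℝ) (v : Fin n → Fin n → ℂ)
    (hv : ONFam v) (ρ : Matrix (Fin n) (Fin n) ℂ) :
    optUtil (expUtility r) (1/2) ε v ρ
      = ρ.trace.re / r - dmin (fun k => Real.exp (r * ε k) / r)
          (expHam ε v (-r/2) * ρ * expHam ε v (-r/2)) := by
  have hVmem := basisMat_unitary v hv
  have hVsmem : (basisMat v)ᴴ ∈ Matrix.unitaryGroup (Fin n) ℂ := by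
    rw [← Matrix.star_eq_conjTranspose]; exact Unitary.star_mem hVmem
  set σ := expHam ε v (-r/2) * ρ * expHam ε v (-r/2) with hσ
  set τ := (basisMat v)ᴴ * σ * basisMat v with hτ
  have h1 : optUtil (expUtility r) (1/2) ε v ρ
      = ⨆ U : Matrix.unitaryGroup (Fin n) ℂ,
          (ρ.trace.re / r - fval (fun k => Real.exp (r * ε k) / r) τ
            ((basisMat v)ᴴ * (U : Matrix (Fin n) (Fin n) ℂ) * basisMat v)) := by
    unfold optUtil
    exact iSup_congr fun U => expUtil_formula r ε v hv ρ U.2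
  rw [h1]
  have hbd : BddBelow (Set.range fun U : Matrix.unitaryGroup (Fin n) ℂ =>
      fval (fun k => Real.exp (r * ε k) / r) τ
        ((basisMat v)ᴴ * (U : Matrix (Fin n) (Fin n) ℂ) * basisMat v)) := by
    refine ⟨-((∑ k, |Real.exp (r * ε k) / r|) * (∑ i, ∑ j, ‖τ i j‖)), ?_⟩
    rintro x ⟨U, rfl⟩
    exact neg_le_of_abs_le (fval_bound _ τ (mul_mem (mul_mem hVsmem U.2) hVmem))
  rw [csup_const_sub _ _ hbd]
  rw [dmin_twosided _ τ hVsmem hVmem]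
  have : dmin (fun k => Real.exp (r * ε k) / r) τ
      = dmin (fun k => Real.exp (r * ε k) / r) σ := by
    have := dmin_conj (fun k => Real.exp (r * ε k) / r) σ hVsmem
    rw [Matrix.conjTranspose_conjTranspose] at this
    rw [hτ, this]
  rw [this]

lemma ergotropy_point (h : Fin n → ℝ) (φ : Fin n → Fin n → ℂ) (σ : Matrix (Fin n) (Fin n) ℂ)
    (U : Matrix (Fin n) (Fin n) ℂ) :
    ((∑ k, ((h k : ℂ)) • ketbra (φ k) (φ k)) * (U * σ * Uᴴ)).trace
      = (Matrix.diagonal (fun k => (h k : ℂ)) * ((basisMat φ)ᴴ * U * 1) * σ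
          * ((basisMat φ)ᴴ * U * 1)ᴴ).trace := by
  set Φ := basisMat φ
  set D := Matrix.diagonal (fun k => (h k : ℂ))
  have hH : (∑ k, ((h k : ℂ)) • ketbra (φ k) (φ k)) = Φ * D * Φᴴ := sum_smul_ketbra φ _
  have alg1 : (Φ * D * Φᴴ) * (U * σ * Uᴴ) = Φ * ((D * Φᴴ) * (U * σ * Uᴴ)) := by
    simp only [Matrix.mul_assoc]
  have alg2 : D * (Φᴴ * U * 1) * σ * (Φᴴ * U * 1)ᴴ
      = ((D * Φᴴ) * (U * σ * Uᴴ)) * Φ := by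
    rw [Matrix.mul_one, Matrix.conjTranspose_mul, Matrix.conjTranspose_conjTranspose]
    simp only [Matrix.mul_assoc]
  rw [hH, alg1, alg2, Matrix.trace_mul_comm]

lemma ergotropy_formula (h : Fin n → ℝ) (φ : Fin n → Fin n → ℂ) (hφ : ONFam φ)
    (σ : Matrix (Fin n) (Fin n) ℂ) :
    ergotropyH (∑ k, ((h k : ℂ)) • ketbra (φ k) (φ k)) σ
      = ((∑ k, ((h k : ℂ)) • ketbra (φ k) (φ k)) * σ).trace.re - dmin h σ := by
  have hΦmem := basisMat_unitary φ hφ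
  have hΦsmem : (basisMat φ)ᴴ ∈ Matrix.unitaryGroup (Fin n) ℂ := by
    rw [← Matrix.star_eq_conjTranspose]; exact Unitary.star_mem hΦmem
  unfold ergotropyH
  have h1 : (⨆ U : Matrix.unitaryGroup (Fin n) ℂ,
        (((∑ k, ((h k : ℂ)) • ketbra (φ k) (φ k)) * σ).trace
          - ((∑ k, ((h k : ℂ)) • ketbra (φ k) (φ k))
              * ((U : Matrix (Fin n) (Fin n) ℂ) * σ * (U : Matrix (Fin n) (Fin n) ℂ)ᴴ)).trace).re)
      = ⨆ U : Matrix.unitaryGroup (Fin n) ℂ,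
          (((∑ k, ((h k : ℂ)) • ketbra (φ k) (φ k)) * σ).trace.re
            - fval h σ ((basisMat φ)ᴴ * (U : Matrix (Fin n) (Fin n) ℂ) * 1)) := by
    refine iSup_congr fun U => ?_
    rw [Complex.sub_re, ergotropy_point h φ σ]
    rfl
  rw [h1]
  have hbd : BddBelow (Set.range fun U : Matrix.unitaryGroup (Fin n) ℂ =>
      fval h σ ((basisMat φ)ᴴ * (U : Matrix (Fin n) (Fin n) ℂ) * 1)) := by
    refine ⟨-((∑ k, |h k|) * (∑ i, ∑ j, ‖σ i j‖)), ?_⟩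
    rintro x ⟨U, rfl⟩
    exact neg_le_of_abs_le (fval_bound h σ (mul_mem (mul_mem hΦsmem U.2) (one_mem _)))
  rw [csup_const_sub _ _ hbd, dmin_twosided h σ hΦsmem (one_mem _)]

lemma ergotropy_nonneg (h : Fin n → ℝ) (φ : Fin n → Fin n → ℂ) (hφ : ONFam φ)
    (σ : Matrix (Fin n) (Fin n) ℂ) :
    0 ≤ ergotropyH (∑ k, ((h k : ℂ)) • ketbra (φ k) (φ k)) σ := by
  rw [ergotropy_formula h φ hφ σ]
  have hΦmem := basisMat_unitary φ hφ
  have hΦsmem : (basisMat φ)ᴴ ∈ Matrix.unitaryGroup (Fin n) ℂ := by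
    rw [← Matrix.star_eq_conjTranspose]; exact Unitary.star_mem hΦmem
  have key := ergotropy_point h φ σ 1
  rw [Matrix.one_mul, Matrix.conjTranspose_one, Matrix.mul_one] at key
  have h2 : dmin h σ ≤ ((∑ k, ((h k : ℂ)) • ketbra (φ k) (φ k)) * σ).trace.re := by
    have := dmin_le h σ ⟨(basisMat φ)ᴴ * 1 * 1, mul_mem (mul_mem hΦsmem (one_mem _)) (one_mem _)⟩
    rw [show (((⟨(basisMat φ)ᴴ * 1 * 1, _⟩ : Matrix.unitaryGroup (Fin n) ℂ))
        : Matrix (Fin n) (Fin n) ℂ) = (basisMat φ)ᴴ * 1 * 1 from rfl] at this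
    unfold fval at this
    refine this.trans (le_of_eq ?_)
    rw [key]
  linarith

section Bipartite
variable {dS dA : ℕ}

lemma psd_diag_nonneg {m : Type*} [Fintype m] [DecidableEq m] {M : Matrix m m ℂ}
    (hM : M.PosSemidef) (i : m) : 0 ≤ M i i := by
  exact hM.diag_nonneg

lemma psd_trace_nonneg {m : Type*} [Fintype m] [DecidableEq m] {M : Matrix m m ℂ}
    (hM : M.PosSemidef) : 0 ≤ M.trace := by
  rw [Matrix.trace]
  exact Finset.sum_nonneg fun i _ => psd_diag_nonneg hM i

lemma psd_trace_eq_re {m : Type*} [Fintype m] [DecidableEq m] {M : Matrix m m ℂ}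
    (hM : M.PosSemidef) : M.trace = ((M.trace.re : ℝ) : ℂ) := by
  have h := psd_trace_nonneg hM
  rw [Complex.nonneg_iff] at h
  exact Complex.ext (by simp) (by simp [← h.2])

lemma psd_trace_zero {m : Type*} [Fintype m] [DecidableEq m] {M : Matrix m m ℂ}
    (hM : M.PosSemidef) (h : M.trace = 0) : M = 0 := by
  exact hM.trace_eq_zero_iff.mp h

lemma trace_ptraceA (ρSA : Matrix (Fin dS × Fin dA) (Fin dS × Fin dA) ℂ) :
    (ptraceA ρSA).trace = ρSA.trace := by
  calc (ptraceA ρSA).trace = ∑ i, ∑ a, ρSA (i, a) (i, a) := by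
        rw [Matrix.trace]; exact Finset.sum_congr rfl fun i _ => rfl
    _ = ∑ p : Fin dS × Fin dA, ρSA p p := (Fintype.sum_prod_type (fun p : Fin dS × Fin dA => ρSA p p)).symm
    _ = ρSA.trace := rfl

/-- The isometry-like matrix `K a` with `K (j,d) i = δ_{ij} w_a(d)`. -/
def condK (w : Fin dA → Fin dA → ℂ) (a : Fin dA) :
    Matrix (Fin dS × Fin dA) (Fin dS) ℂ :=
  Matrix.of fun p i => if p.1 = i then w a p.2 else 0

lemma condUnnorm_eq_K (w : Fin dA → Fin dA → ℂ)
    (ρSA : Matrix (Fin dS × Fin dA) (Fin dS × Fin dA) ℂ) (a : Fin dA) :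
    condUnnorm w ρSA a = (condK (dS := dS) w a)ᴴ * ρSA * condK (dS := dS) w a := by
  ext i j
  rw [condUnnorm, Matrix.of_apply, Matrix.mul_apply]
  rw [Fintype.sum_prod_type]
  conv_rhs => rw [Finset.sum_comm]
  have collapse_q : ∀ (d : Fin dA),
      ∑ q1 : Fin dS, ((condK (dS := dS) w a)ᴴ * ρSA) i (q1, d) * condK (dS := dS) w a (q1, d) j
        = ((condK (dS := dS) w a)ᴴ * ρSA) i (j, d) * w a d := by
    intro d
    rw [Finset.sum_eq_single j]
    · rw [condK]; simp
    · intro q1 _ hq; rw [condK]; simp [hq]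
    · simp
  rw [Finset.sum_congr rfl fun d _ => collapse_q d]
  have collapse_p : ∀ d : Fin dA, ((condK (dS := dS) w a)ᴴ * ρSA) i (j, d)
      = ∑ c : Fin dA, star (w a c) * ρSA (i, c) (j, d) := by
    intro d
    rw [Matrix.mul_apply, Fintype.sum_prod_type]
    rw [Finset.sum_eq_single i]
    · refine Finset.sum_congr rfl fun c _ => ?_
      rw [Matrix.conjTranspose_apply, condK]
      simp
    · intro p1 _ hp
      refine Finset.sum_eq_zero fun c _ => ?_
      rw [Matrix.conjTranspose_apply, condK]
      simp [hp]
    · simp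
  have step : ∑ d : Fin dA, ((condK (dS := dS) w a)ᴴ * ρSA) i (j, d) * w a d
      = ∑ d : Fin dA, (∑ c : Fin dA, star (w a c) * ρSA (i, c) (j, d)) * w a d :=
    Finset.sum_congr rfl fun d _ => by rw [collapse_p d]
  rw [step, Finset.sum_comm]
  refine Finset.sum_congr rfl fun d _ => ?_
  rw [Finset.sum_mul]
  refine Finset.sum_congr rfl fun c _ => ?_
  ring

lemma condUnnorm_posSemidef (w : Fin dA → Fin dA → ℂ)
    {ρSA : Matrix (Fin dS × Fin dA) (Fin dS × Fin dA) ℂ} (hρ : ρSA.PosSemidef) (a : Fin dA) :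
    (condUnnorm w ρSA a).PosSemidef := by
  rw [condUnnorm_eq_K]
  exact hρ.conjTranspose_mul_mul_same _

lemma prob_nonneg (w : Fin dA → Fin dA → ℂ)
    {ρSA : Matrix (Fin dS × Fin dA) (Fin dS × Fin dA) ℂ} (hρ : ρSA.PosSemidef) (a : Fin dA) :
    0 ≤ prob w ρSA a := by
  rw [prob]
  have := psd_trace_nonneg (condUnnorm_posSemidef w hρ a)
  rw [Complex.nonneg_iff] at this
  exact this.1

lemma trace_condUnnorm (w : Fin dA → Fin dA → ℂ)
    {ρSA : Matrix (Fin dS × Fin dA) (Fin dS × Fin dA) ℂ} (hρ : ρSA.PosSemidef) (a : Fin dA) :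
    (condUnnorm w ρSA a).trace = ((prob w ρSA a : ℝ) : ℂ) :=
  psd_trace_eq_re (condUnnorm_posSemidef w hρ a)

lemma condUnnorm_zero (w : Fin dA → Fin dA → ℂ)
    {ρSA : Matrix (Fin dS × Fin dA) (Fin dS × Fin dA) ℂ} (hρ : ρSA.PosSemidef) (a : Fin dA)
    (h : prob w ρSA a = 0) : condUnnorm w ρSA a = 0 := by
  refine psd_trace_zero (condUnnorm_posSemidef w hρ a) ?_
  rw [trace_condUnnorm w hρ a, h]
  simp

lemma sum_condUnnorm (w : Fin dA → Fin dA → ℂ) (hw : ONFam w)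
    (ρSA : Matrix (Fin dS × Fin dA) (Fin dS × Fin dA) ℂ) :
    ∑ a, condUnnorm w ρSA a = ptraceA ρSA := by
  have hcomp : ∀ c d : Fin dA, ∑ a, w a d * star (w a c) = if d = c then 1 else 0 := by
    intro c d
    have h0 := congrFun (congrFun (basisMat_mul_conj w hw) d) c
    rw [Matrix.mul_apply, Matrix.one_apply] at h0
    rw [← h0]
    refine Finset.sum_congr rfl fun a _ => ?_
    rw [Matrix.conjTranspose_apply]
    rfl
  ext i j
  rw [Matrix.sum_apply, ptraceA, Matrix.of_apply]
  have swap : ∀ a, condUnnorm w ρSA a i j = ∑ c, ∑ d, ρSA (i, c) (j, d) * (w a d * star (w a c)) := by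
    intro a; rw [condUnnorm]; rfl
  rw [Finset.sum_congr rfl fun a _ => swap a, Finset.sum_comm]
  refine Finset.sum_congr rfl fun c _ => ?_
  rw [Finset.sum_comm]
  have : ∀ d, ∑ a, ρSA (i, c) (j, d) * (w a d * star (w a c))
      = ρSA (i, c) (j, d) * (if d = c then 1 else 0) := by
    intro d
    rw [← Finset.mul_sum, hcomp c d]
  rw [Finset.sum_congr rfl fun d _ => this d]
  rw [Finset.sum_eq_single c]
  · simp
  · intro d _ hd; simp [hd]
  · simp

lemma sum_prob (w : Fin dA → Fin dA → ℂ) (hw : ONFam w)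
    (ρSA : Matrix (Fin dS × Fin dA) (Fin dS × Fin dA) ℂ) :
    ∑ a, prob w ρSA a = ρSA.trace.re := by
  have : ∑ a, prob w ρSA a = ((∑ a, (condUnnorm w ρSA a).trace)).re := by
    rw [Complex.re_sum]
    rfl
  rw [this, ← Matrix.trace_sum, sum_condUnnorm w hw, trace_ptraceA]

lemma smul_condState (w : Fin dA → Fin dA → ℂ)
    (ρSA : Matrix (Fin dS × Fin dA) (Fin dS × Fin dA) ℂ) (a : Fin dA)
    (h : prob w ρSA a ≠ 0) :
    ((prob w ρSA a : ℝ) : ℂ) • condState w ρSA a = condUnnorm w ρSA a := by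
  rw [condState, smul_smul]
  rw [mul_inv_cancel₀ (by exact_mod_cast h)]
  rw [one_smul]

lemma trace_condState (w : Fin dA → Fin dA → ℂ)
    {ρSA : Matrix (Fin dS × Fin dA) (Fin dS × Fin dA) ℂ} (hρ : ρSA.PosSemidef) (a : Fin dA)
    (h : prob w ρSA a ≠ 0) :
    (condState w ρSA a).trace = 1 := by
  rw [condState, Matrix.trace_smul, trace_condUnnorm w hρ a, smul_eq_mul]
  rw [inv_mul_cancel₀ (by exact_mod_cast h)]

end Bipartite

/-- Lemma 1: the daemonic gain for a fixed measurement basis equals the average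
of the ergotropies of the non-normalized states `e^{-rH_S/2} ρ_{S|a} e^{-rH_S/2}` with respect
to the Hamiltonian `H̃_S = ∑ₖ (e^{r εₖ}/r)|uₖ⟩⟨uₖ|`, and is nonnegative. -/
theorem stmt1 {dS dA : ℕ} (r : ℝ) (hr : r ≠ 0)
    (ε : Fin dS → ℝ) (hε : StrictMono ε)
    (v : Fin dS → Fin dS → ℂ) (hv : ONFam v)
    (ρSA : Matrix (Fin dS × Fin dA) (Fin dS × Fin dA) ℂ) (hρSA : IsDensity ρSA)
    (uvals : Fin dS → ℝ) (φ : Fin dS → Fin dS → ℂ)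
    (hφ : ONFam φ) (hdec : Antitone uvals)
    (hspec : expHam ε v (-r/2) * ptraceA ρSA * expHam ε v (-r/2)
      = ∑ k, (uvals k : ℂ) • ketbra (φ k) (φ k))
    (w : Fin dA → Fin dA → ℂ) (hw : ONFam w) :
    daemonicUtil (expUtility r) (1/2) ε v w ρSA
        - optUtil (expUtility r) (1/2) ε v (ptraceA ρSA)
      = ∑ a ∈ Finset.univ.filter (fun a => 0 < prob w ρSA a),
          prob w ρSA a *
            ergotropyH (∑ k, ((Real.exp (r * ε k) / r : ℝ) : ℂ) • ketbra (φ k) (φ k))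
              (expHam ε v (-r/2) * condState w ρSA a * expHam ε v (-r/2)) ∧
    0 ≤ daemonicUtil (expUtility r) (1/2) ε v w ρSA
        - optUtil (expUtility r) (1/2) ε v (ptraceA ρSA) := by
  classical
  have hpsd : ρSA.PosSemidef := hρSA.1
  have hΦmem := basisMat_unitary φ hφ
  -- monotone Hamiltonian eigenvalues
  have hmono : Monotone (fun k => Real.exp (r * ε k) / r) := by
    intro k l hkl
    have hle : ε k ≤ ε l := hε.monotone hkl
    rcases lt_or_gt_of_ne hr with hneg | hpos
    · have h1 : r * ε l ≤ r * ε k := by nlinarith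
      exact div_le_div_of_nonpos_of_le hneg.le (Real.exp_le_exp.mpr h1)
    · have h1 : r * ε k ≤ r * ε l := by nlinarith
      exact div_le_div_of_nonneg_right (Real.exp_le_exp.mpr h1) hpos.le
  -- the reduced state has unit trace
  have htrS : (ptraceA ρSA).trace = 1 := by rw [trace_ptraceA, hρSA.2]
  -- key value: dmin of the full state
  have hspec' : expHam ε v (-r/2) * ptraceA ρSA * expHam ε v (-r/2)
      = basisMat φ * Matrix.diagonal (fun k => ((uvals k : ℝ) : ℂ)) * (basisMat φ)ᴴ := by
    rw [hspec]
    exact sum_smul_ketbra φ _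
  have hdminS : dmin (fun k => Real.exp (r * ε k) / r)
      (expHam ε v (-r/2) * ptraceA ρSA * expHam ε v (-r/2))
      = ∑ k, (Real.exp (r * ε k) / r) * uvals k := by
    rw [hspec', dmin_conj _ _ hΦmem, dmin_diag hmono hdec]
  -- optUtil of the full state
  have hopt : optUtil (expUtility r) (1/2) ε v (ptraceA ρSA)
      = 1 / r - ∑ k, (Real.exp (r * ε k) / r) * uvals k := by
    rw [optUtil_formula r ε v hv (ptraceA ρSA), htrS, hdminS]
    norm_num
  -- trace of Hm * σS
  have htrHm : ((∑ k, ((Real.exp (r * ε k) / r : ℝ) : ℂ) • ketbra (φ k) (φ k))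
        * (expHam ε v (-r/2) * ptraceA ρSA * expHam ε v (-r/2))).trace.re
      = ∑ k, (Real.exp (r * ε k) / r) * uvals k := by
    rw [hspec', sum_smul_ketbra φ (fun k => ((Real.exp (r * ε k) / r : ℝ) : ℂ))]
    set Φ := basisMat φ
    set Dh := Matrix.diagonal (fun k => ((Real.exp (r * ε k) / r : ℝ) : ℂ))
    set Du := Matrix.diagonal (fun k => ((uvals k : ℝ) : ℂ))
    have hΦ1 : Φᴴ * Φ = 1 := basisMat_conj_mul φ hφ
    have alg : (Φ * Dh * Φᴴ) * (Φ * Du * Φᴴ) = Φ * ((Dh * Du) * Φᴴ) := by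
      calc (Φ * Dh * Φᴴ) * (Φ * Du * Φᴴ)
          = Φ * (Dh * ((Φᴴ * Φ) * (Du * Φᴴ))) := by simp only [Matrix.mul_assoc]
        _ = Φ * ((Dh * Du) * Φᴴ) := by
            rw [hΦ1, Matrix.one_mul, Matrix.mul_assoc]
    rw [alg, Matrix.trace_mul_comm, Matrix.mul_assoc, hΦ1, Matrix.mul_one,
      Matrix.diagonal_mul_diagonal, Matrix.trace_diagonal]
    rw [Complex.re_sum]
    refine Finset.sum_congr rfl fun k _ => ?_
    rw [← Complex.ofReal_mul, Complex.ofReal_re]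
  -- per-outcome utilities on the positive-probability set
  have hcond : ∀ a ∈ Finset.univ.filter (fun a => 0 < prob w ρSA a),
      optUtil (expUtility r) (1/2) ε v (condState w ρSA a)
        = 1 / r - dmin (fun k => Real.exp (r * ε k) / r)
            (expHam ε v (-r/2) * condState w ρSA a * expHam ε v (-r/2)) := by
    intro a ha
    have hpa : prob w ρSA a ≠ 0 := (Finset.mem_filter.mp ha).2.ne'
    rw [optUtil_formula r ε v hv (condState w ρSA a), trace_condState w hpsd a hpa]
    norm_num
  -- ergotropy formula per outcome
  have herg : ∀ a,
      ergotropyH (∑ k, ((Real.exp (r * ε k) / r : ℝ) : ℂ) • ketbra (φ k) (φ k))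
          (expHam ε v (-r/2) * condState w ρSA a * expHam ε v (-r/2))
        = ((∑ k, ((Real.exp (r * ε k) / r : ℝ) : ℂ) • ketbra (φ k) (φ k))
            * (expHam ε v (-r/2) * condState w ρSA a * expHam ε v (-r/2))).trace.re
          - dmin (fun k => Real.exp (r * ε k) / r)
              (expHam ε v (-r/2) * condState w ρSA a * expHam ε v (-r/2)) := fun a =>
    ergotropy_formula (fun k => Real.exp (r * ε k) / r) φ hφ _
  -- sum of probabilities over the filter is 1
  have hprob1 : ∑ a ∈ Finset.univ.filter (fun a => 0 < prob w ρSA a), prob w ρSA a = 1 := by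
    have hzero : ∀ a ∈ Finset.univ, a ∉ Finset.univ.filter (fun a => 0 < prob w ρSA a) →
        prob w ρSA a = 0 := by
      intro a _ ha
      rw [Finset.mem_filter] at ha
      push_neg at ha
      exact le_antisymm (ha (Finset.mem_univ a)) (prob_nonneg w hpsd a)
    rw [Finset.sum_subset (Finset.filter_subset _ _) hzero, sum_prob w hw ρSA, hρSA.2]
    simp
  -- average of conditional traces equals the full trace
  have havg : ∑ a ∈ Finset.univ.filter (fun a => 0 < prob w ρSA a),
      prob w ρSA a * ((∑ k, ((Real.exp (r * ε k) / r : ℝ) : ℂ) • ketbra (φ k) (φ k))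
        * (expHam ε v (-r/2) * condState w ρSA a * expHam ε v (-r/2))).trace.re
      = ∑ k, (Real.exp (r * ε k) / r) * uvals k := by
    set Hm := ∑ k, ((Real.exp (r * ε k) / r : ℝ) : ℂ) • ketbra (φ k) (φ k) with hHm
    set E := expHam ε v (-r/2) with hE
    have step1 : ∀ a ∈ Finset.univ.filter (fun a => 0 < prob w ρSA a),
        prob w ρSA a * ((Hm * (E * condState w ρSA a * E)).trace).re
          = ((Hm * (E * condUnnorm w ρSA a * E)).trace).re := by
      intro a ha
      have hpa : prob w ρSA a ≠ 0 := (Finset.mem_filter.mp ha).2.ne'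
      have hsm : E * condUnnorm w ρSA a * E
          = ((prob w ρSA a : ℝ) : ℂ) • (E * condState w ρSA a * E) := by
        rw [← smul_condState w ρSA a hpa, Matrix.mul_smul, Matrix.smul_mul]
      rw [hsm, Matrix.mul_smul, Matrix.trace_smul, smul_eq_mul, Complex.re_ofReal_mul]
    rw [Finset.sum_congr rfl step1]
    have hzero2 : ∀ a ∈ Finset.univ, a ∉ Finset.univ.filter (fun a => 0 < prob w ρSA a) →
        ((Hm * (E * condUnnorm w ρSA a * E)).trace).re = 0 := by
      intro a _ ha
      rw [Finset.mem_filter] at ha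
      push_neg at ha
      have hpa0 : prob w ρSA a = 0 :=
        le_antisymm (ha (Finset.mem_univ a)) (prob_nonneg w hpsd a)
      rw [condUnnorm_zero w hpsd a hpa0]
      simp
    rw [Finset.sum_subset (Finset.filter_subset _ _) hzero2]
    have inner : E * (∑ a, condUnnorm w ρSA a) * E = ∑ a, E * condUnnorm w ρSA a * E := by
      rw [Finset.mul_sum, Finset.sum_mul]
    have hlinear : Hm * (E * ptraceA ρSA * E)
        = ∑ a, Hm * (E * condUnnorm w ρSA a * E) := by
      rw [← sum_condUnnorm w hw ρSA, inner, Finset.mul_sum]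
    have hre : ∑ a, ((Hm * (E * condUnnorm w ρSA a * E)).trace).re
        = (((∑ a, Hm * (E * condUnnorm w ρSA a * E))).trace).re := by
      rw [Matrix.trace_sum, Complex.re_sum]
    rw [hre, ← hlinear]
    exact htrHm
  -- expand daemonicUtil over the filter
  have hdaem : daemonicUtil (expUtility r) (1/2) ε v w ρSA
      = ∑ a ∈ Finset.univ.filter (fun a => 0 < prob w ρSA a),
          prob w ρSA a * optUtil (expUtility r) (1/2) ε v (condState w ρSA a) := by
    rw [daemonicUtil]
    refine (Finset.sum_subset (Finset.filter_subset _ _) ?_).symm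
    intro a _ ha
    rw [Finset.mem_filter] at ha
    push_neg at ha
    have hpa0 : prob w ρSA a = 0 :=
      le_antisymm (ha (Finset.mem_univ a)) (prob_nonneg w hpsd a)
    rw [hpa0, zero_mul]
  -- the main equality
  have main : daemonicUtil (expUtility r) (1/2) ε v w ρSA
      - optUtil (expUtility r) (1/2) ε v (ptraceA ρSA)
      = ∑ a ∈ Finset.univ.filter (fun a => 0 < prob w ρSA a),
          prob w ρSA a *
            ergotropyH (∑ k, ((Real.exp (r * ε k) / r : ℝ) : ℂ) • ketbra (φ k) (φ k))
              (expHam ε v (-r/2) * condState w ρSA a * expHam ε v (-r/2)) := by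
    have sum1 : ∑ a ∈ Finset.univ.filter (fun a => 0 < prob w ρSA a),
        prob w ρSA a * optUtil (expUtility r) (1/2) ε v (condState w ρSA a)
        = ∑ a ∈ Finset.univ.filter (fun a => 0 < prob w ρSA a),
          (prob w ρSA a * (1/r)
            - prob w ρSA a * dmin (fun k => Real.exp (r * ε k) / r)
                (expHam ε v (-r/2) * condState w ρSA a * expHam ε v (-r/2))) :=
      Finset.sum_congr rfl fun a ha => by rw [hcond a ha, mul_sub]
    have sum2 : ∑ a ∈ Finset.univ.filter (fun a => 0 < prob w ρSA a),
        prob w ρSA a *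
          ergotropyH (∑ k, ((Real.exp (r * ε k) / r : ℝ) : ℂ) • ketbra (φ k) (φ k))
            (expHam ε v (-r/2) * condState w ρSA a * expHam ε v (-r/2))
        = ∑ a ∈ Finset.univ.filter (fun a => 0 < prob w ρSA a),
          (prob w ρSA a *
              ((∑ k, ((Real.exp (r * ε k) / r : ℝ) : ℂ) • ketbra (φ k) (φ k))
                * (expHam ε v (-r/2) * condState w ρSA a * expHam ε v (-r/2))).trace.re
            - prob w ρSA a * dmin (fun k => Real.exp (r * ε k) / r)
                (expHam ε v (-r/2) * condState w ρSA a * expHam ε v (-r/2))) :=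
      Finset.sum_congr rfl fun a _ => by rw [herg a, mul_sub]
    rw [hdaem, hopt, sum1, sum2, Finset.sum_sub_distrib, Finset.sum_sub_distrib,
      ← Finset.sum_mul, hprob1, havg]
    ring
  refine ⟨main, ?_⟩
  rw [main]
  refine Finset.sum_nonneg fun a ha => ?_
  have hpa : 0 ≤ prob w ρSA a := prob_nonneg w hpsd a
  exact mul_nonneg hpa (ergotropy_nonneg (fun k => Real.exp (r * ε k) / r) φ hφ _)
end Daemonic
end
end

section
/- For any density matrix ρ on ℂ^{d_S}, any unitary U on ℂ^{d_S} and any q ∈ ℝ, the first moment of the quasiprobability distribution of work equals the average work and is independent of q: Σ_{i,j,k} Re(⟨ε_i|ρ|ε_j⟩⟨ε_j|U†|ε_k⟩⟨ε_k|U|ε_i⟩) (q ε_i + (1−q) ε_j − ε_k) = Tr(H_S ρ) − Tr(H_S U ρ U†). -/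
open Matrix BigOperators Finset Kronecker
open scoped ComplexOrder

noncomputable section

namespace Daemonic

section aux
variable {n : ℕ} {v : Fin n → Fin n → ℂ}

lemma complete (hv : ONFam v) (b c : Fin n) :
    ∑ k, v k b * star (v k c) = if b = c then 1 else 0 := by
  let V : Matrix (Fin n) (Fin n) ℂ := Matrix.of fun i j => v j i
  have h1 : Vᴴ * V = 1 := by
    ext i j
    simpa [Matrix.mul_apply, Matrix.conjTranspose_apply, V, Matrix.one_apply,
      dotProduct] using hv i j
  have h2 : V * Vᴴ = 1 := mul_eq_one_comm.mp h1
  have h3 := congrFun (congrFun h2 b) c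
  simpa [Matrix.mul_apply, Matrix.conjTranspose_apply, V, Matrix.one_apply] using h3

lemma key (hv : ONFam v) (u w : Fin n → ℂ) :
    ∑ k, (u ⬝ᵥ v k) * (star (v k) ⬝ᵥ w) = u ⬝ᵥ w := by
  have : ∀ k, (u ⬝ᵥ v k) * (star (v k) ⬝ᵥ w)
      = ∑ a, ∑ b, u a * w b * (v k a * star (v k b)) := by
    intro k
    rw [dotProduct, dotProduct, Finset.sum_mul_sum]
    refine Finset.sum_congr rfl fun a _ => Finset.sum_congr rfl fun b _ => ?_
    simp [Pi.star_apply]; ring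
  simp_rw [this]
  rw [Finset.sum_comm]
  refine Eq.trans ?_ (rfl : u ⬝ᵥ w = u ⬝ᵥ w)
  rw [dotProduct]
  refine Finset.sum_congr rfl fun a _ => ?_
  rw [Finset.sum_comm]
  simp_rw [← Finset.mul_sum, complete hv]
  simp

lemma matElem_mul (hv : ONFam v) (M N : Matrix (Fin n) (Fin n) ℂ) (x y : Fin n → ℂ) :
    ∑ k, matElem M x (v k) * matElem N (v k) y = matElem (M * N) x y := by
  unfold matElem
  simp_rw [Matrix.dotProduct_mulVec (star x) M]
  rw [key hv, ← Matrix.mulVec_mulVec, Matrix.dotProduct_mulVec (star x) M]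

lemma matElem_one (hv : ONFam v) (i j : Fin n) :
    matElem 1 (v i) (v j) = if i = j then 1 else 0 := by
  rw [matElem, Matrix.one_mulVec]; exact hv i j

lemma trace_ham_mul (ε : Fin n → ℝ) (σ : Matrix (Fin n) (Fin n) ℂ) :
    (ham ε v * σ).trace = ∑ k, (ε k : ℂ) * matElem σ (v k) (v k) := by
  unfold ham ketbra
  rw [Matrix.sum_mul, Matrix.trace_sum]
  refine Finset.sum_congr rfl fun k _ => ?_
  rw [Matrix.smul_mul, Matrix.trace_smul, smul_eq_mul]
  congr 1
  simp only [Matrix.trace, Matrix.diag_apply, Matrix.mul_apply, Matrix.vecMulVec_apply,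
    matElem, dotProduct, Matrix.mulVec, Pi.star_apply, Finset.mul_sum]
  rw [Finset.sum_comm]
  refine Finset.sum_congr rfl fun a _ => Finset.sum_congr rfl fun b _ => ?_
  ring

lemma matElem_self_real {σ : Matrix (Fin n) (Fin n) ℂ} (hσ : σ.IsHermitian)
    (x : Fin n → ℂ) : (matElem σ x x).im = 0 := by
  have h : (starRingEnd ℂ) (matElem σ x x) = matElem σ x x := by
    have hs : ∀ a b, (starRingEnd ℂ) (σ a b) = σ b a := by
      intro a b; exact hσ.apply b a
    simp only [matElem, dotProduct, Matrix.mulVec, Pi.star_apply, map_sum, _root_.map_mul,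
      Complex.conj_conj, RCLike.star_def, hs, Finset.mul_sum]
    rw [Finset.sum_comm]
    refine Finset.sum_congr rfl fun a _ => Finset.sum_congr rfl fun b _ => ?_
    ring
  exact Complex.conj_eq_iff_im.mp h

end aux

/-- the first moment of the quasiprobability distribution of work equals the
average work `Tr(H_S ρ) - Tr(H_S U ρ U†)`, independently of `q`. -/
theorem stmt9 {dS : ℕ} (q : ℝ)
    (ε : Fin dS → ℝ) (hε : StrictMono ε)
    (v : Fin dS → Fin dS → ℂ) (hv : ONFam v)
    (ρ : Matrix (Fin dS) (Fin dS) ℂ) (hρ : IsDensity ρ)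
    (U : Matrix (Fin dS) (Fin dS) ℂ) (hU : U ∈ Matrix.unitaryGroup (Fin dS) ℂ) :
    ((∑ i, ∑ j, ∑ k,
        (matElem ρ (v i) (v j) * matElem Uᴴ (v j) (v k) * matElem U (v k) (v i)).re *
          (q * ε i + (1 - q) * ε j - ε k) : ℝ) : ℂ)
      = (ham ε v * ρ).trace - (ham ε v * (U * ρ * Uᴴ)).trace := by
  have hU1 : Uᴴ * U = 1 := by
    simpa [Matrix.star_eq_conjTranspose] using hU.1
  set S : ℂ := ∑ i, ∑ j, ∑ k,
      matElem ρ (v i) (v j) * matElem Uᴴ (v j) (v k) * matElem U (v k) (v i) *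
        ((q * ε i + (1 - q) * ε j - ε k : ℝ) : ℂ) with hSdef
  have hB : ∀ j i : Fin dS,
      (∑ k, matElem Uᴴ (v j) (v k) * matElem U (v k) (v i)) = if j = i then 1 else 0 := by
    intro j i
    rw [matElem_mul hv, hU1, matElem_one hv]
  have hT3 : ∀ k, (∑ i, ∑ j,
      matElem ρ (v i) (v j) * matElem Uᴴ (v j) (v k) * matElem U (v k) (v i))
        = matElem (U * ρ * Uᴴ) (v k) (v k) := by
    intro k
    calc ∑ i, ∑ j, matElem ρ (v i) (v j) * matElem Uᴴ (v j) (v k) * matElem U (v k) (v i)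
        = ∑ i, matElem U (v k) (v i) * matElem (ρ * Uᴴ) (v i) (v k) := by
          refine Finset.sum_congr rfl fun i _ => ?_
          rw [← matElem_mul hv ρ Uᴴ (v i) (v k), Finset.mul_sum]
          refine Finset.sum_congr rfl fun j _ => ?_
          ring
      _ = matElem (U * (ρ * Uᴴ)) (v k) (v k) := matElem_mul hv U (ρ * Uᴴ) _ _
      _ = matElem (U * ρ * Uᴴ) (v k) (v k) := by rw [mul_assoc]
  have hS : S = (ham ε v * ρ).trace - (ham ε v * (U * ρ * Uᴴ)).trace := by
    have expand : ∀ i j k : Fin dS,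
        matElem ρ (v i) (v j) * matElem Uᴴ (v j) (v k) * matElem U (v k) (v i) *
            ((q * ε i + (1 - q) * ε j - ε k : ℝ) : ℂ)
          = (matElem ρ (v i) (v j) * ((q * ε i + (1 - q) * ε j : ℝ) : ℂ)) *
              (matElem Uᴴ (v j) (v k) * matElem U (v k) (v i))
            - matElem ρ (v i) (v j) * matElem Uᴴ (v j) (v k) * matElem U (v k) (v i) *
                ((ε k : ℝ) : ℂ) := by
      intro i j k; push_cast; ring
    rw [hSdef]
    simp_rw [expand, Finset.sum_sub_distrib, ← Finset.mul_sum, hB]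
    have part1 : (∑ i, ∑ j, (matElem ρ (v i) (v j) * ((q * ε i + (1 - q) * ε j : ℝ) : ℂ)) *
        (if j = i then 1 else 0)) = (ham ε v * ρ).trace := by
      rw [trace_ham_mul]
      refine Finset.sum_congr rfl fun i _ => ?_
      simp only [mul_ite, mul_one, mul_zero, Finset.sum_ite_eq', Finset.mem_univ, if_true]
      push_cast
      ring
    have part2 : (∑ i, ∑ j, ∑ k,
        matElem ρ (v i) (v j) * matElem Uᴴ (v j) (v k) * matElem U (v k) (v i) *
          ((ε k : ℝ) : ℂ)) = (ham ε v * (U * ρ * Uᴴ)).trace := by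
      rw [trace_ham_mul]
      calc (∑ i, ∑ j, ∑ k,
          matElem ρ (v i) (v j) * matElem Uᴴ (v j) (v k) * matElem U (v k) (v i) *
            ((ε k : ℝ) : ℂ))
          = ∑ k, ∑ i, ∑ j,
            matElem ρ (v i) (v j) * matElem Uᴴ (v j) (v k) * matElem U (v k) (v i) *
              ((ε k : ℝ) : ℂ) := by
            rw [show (∑ i, ∑ j, ∑ k,
                matElem ρ (v i) (v j) * matElem Uᴴ (v j) (v k) * matElem U (v k) (v i) *
                  ((ε k : ℝ) : ℂ))
              = ∑ i, ∑ k, ∑ j,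
                matElem ρ (v i) (v j) * matElem Uᴴ (v j) (v k) * matElem U (v k) (v i) *
                  ((ε k : ℝ) : ℂ) from Finset.sum_congr rfl fun i _ => Finset.sum_comm]
            exact Finset.sum_comm
        _ = ∑ k, ((ε k : ℝ) : ℂ) * matElem (U * ρ * Uᴴ) (v k) (v k) := by
            refine Finset.sum_congr rfl fun k _ => ?_
            rw [← hT3 k, Finset.mul_sum]
            refine Finset.sum_congr rfl fun i _ => ?_
            rw [Finset.mul_sum]
            refine Finset.sum_congr rfl fun j _ => ?_
            ring
    rw [part1, part2]
  have him : S.im = 0 := by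
    rw [hS]
    have h1 : ((ham ε v * ρ).trace).im = 0 := by
      rw [trace_ham_mul]
      rw [Complex.im_sum]
      refine Finset.sum_eq_zero fun k _ => ?_
      rw [Complex.mul_im, matElem_self_real hρ.1.1 (v k)]
      simp
    have h2 : ((ham ε v * (U * ρ * Uᴴ)).trace).im = 0 := by
      rw [trace_ham_mul]
      rw [Complex.im_sum]
      refine Finset.sum_eq_zero fun k _ => ?_
      rw [Complex.mul_im,
        matElem_self_real (Matrix.isHermitian_mul_mul_conjTranspose U hρ.1.1) (v k)]
      simp
    simp [Complex.sub_im, h1, h2]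
  have hre : S.re = ∑ i, ∑ j, ∑ k,
      (matElem ρ (v i) (v j) * matElem Uᴴ (v j) (v k) * matElem U (v k) (v i)).re *
        (q * ε i + (1 - q) * ε j - ε k) := by
    rw [hSdef]
    simp only [Complex.re_sum]
    refine Finset.sum_congr rfl fun i _ => Finset.sum_congr rfl fun j _ => ?_
    refine Finset.sum_congr rfl fun k _ => ?_
    rw [Complex.mul_re, Complex.ofReal_re, Complex.ofReal_im, mul_zero, sub_zero]
  rw [← hS]
  apply Complex.ext
  · rw [Complex.ofReal_re, hre]
  · rw [Complex.ofReal_im, him]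

end Daemonic
end
end
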